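/- arXiv:2601.18977 — 10 statements merged into one kernel-verified Lean document; each statement's English description precedes it below -/
import Mathlib

section
/- (Desnanot–Jacobi / Dodgson condensation) For n ≥ 3 and any n×n real matrix A, det(A)·det(A_{n-2}(2,2)) = det(A_{n-1}(1,1))·det(A_{n-1}(2,2)) − det(A_{n-1}(1,2))·det(A_{n-1}(2,1)), where A_r(i,j) is the r×r contiguous submatrix of A with rows i,…,i+r−1 and columns j,…,j+r−1. -/
open Matrix

section Aux

variable {R : Type*} [CommRing R]

/-- The reindexing equivalence: `Fin 2` ↦ {0, last}, `Fin (n+1)` ↦ middle indices. -/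
def myE (n : ℕ) : Fin 2 ⊕ Fin (n + 1) ≃ Fin (n + 3) where
  toFun := Sum.elim (fun a => if a = 0 then 0 else Fin.last (n + 2))
    (fun k => k.succ.castSucc)
  invFun := fun i =>
    if h : i = 0 then Sum.inl 0
    else if h' : i = Fin.last (n + 2) then Sum.inl 1
    else Sum.inr ⟨i.val - 1, by
      simp [Fin.ext_iff, -Fin.val_eq_zero_iff] at h h'
      omega⟩
  left_inv := by
    rintro (a | k)
    · fin_cases a <;> simp [Fin.ext_iff, -Fin.val_eq_zero_iff]
    · have h1 : (k.succ.castSucc : Fin (n + 3)) ≠ 0 := by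
        simp [Fin.ext_iff, -Fin.val_eq_zero_iff]
      have h2 : (k.succ.castSucc : Fin (n + 3)) ≠ Fin.last (n + 2) := by
        simp [Fin.ext_iff, -Fin.val_eq_zero_iff]; omega
      simp [h1, h2, Fin.ext_iff, -Fin.val_eq_zero_iff]; omega
  right_inv := by
    intro i
    by_cases h : i = 0
    · simp [h]
    · by_cases h' : i = Fin.last (n + 2)
      · simp [h, h']
      · simp only [h, h', dite_false]
        simp [Fin.ext_iff, -Fin.val_eq_zero_iff] at h h' ⊢
        omega

theorem dodgson_mul (n : ℕ) (A : Matrix (Fin (n + 3)) (Fin (n + 3)) R) :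
    A.det * (A.det * (A.submatrix (fun k : Fin (n + 1) => k.succ.castSucc)
        (fun k : Fin (n + 1) => k.succ.castSucc)).det) =
      A.det * ((A.submatrix (fun k : Fin (n + 2) => k.castSucc) (fun k : Fin (n + 2) => k.castSucc)).det *
          (A.submatrix (fun k : Fin (n + 2) => k.succ) (fun k : Fin (n + 2) => k.succ)).det -
        (A.submatrix (fun k : Fin (n + 2) => k.castSucc) (fun k : Fin (n + 2) => k.succ)).det *
          (A.submatrix (fun k : Fin (n + 2) => k.succ) (fun k : Fin (n + 2) => k.castSucc)).det) := by
  classical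
  set l : Fin (n + 3) := Fin.last (n + 2) with hl
  set C : Matrix (Fin (n + 3)) (Fin (n + 3)) R := fun i j =>
    if j = 0 then adjugate A i 0
    else if j = l then adjugate A i l
    else (1 : Matrix (Fin (n + 3)) (Fin (n + 3)) R) i j with hC
  set D : Matrix (Fin (n + 3)) (Fin (n + 3)) R := fun i j =>
    if j = 0 ∨ j = l then (if i = j then A.det else 0) else A i j with hD
  have h0l : ¬ ((0 : Fin (n + 3)) = l) := by simp [hl, Fin.ext_iff, -Fin.val_eq_zero_iff]
  have hl0 : ¬ (l = (0 : Fin (n + 3))) := fun h => h0l h.symm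
  have hmul : A * C = D := by
    ext i j
    rw [mul_apply]
    by_cases h0 : j = 0
    · subst h0
      have h := congrFun (congrFun (mul_adjugate A) i) 0
      rw [mul_apply] at h
      have hsum : ∑ k, A i k * C k 0 = (A.det • (1 : Matrix (Fin (n+3)) (Fin (n+3)) R)) i 0 := by
        rw [← h]; apply Finset.sum_congr rfl; intro k _; simp [hC]
      rw [hsum]
      by_cases hi : i = 0 <;> simp [hD, hi, one_apply]
    · by_cases hL : j = l
      · subst hL
        have h := congrFun (congrFun (mul_adjugate A) i) l
        rw [mul_apply] at h
        have hsum : ∑ k, A i k * C k l = (A.det • (1 : Matrix (Fin (n+3)) (Fin (n+3)) R)) i l := by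
          rw [← h]; apply Finset.sum_congr rfl; intro k _; simp [hC, hl0]
        rw [hsum]
        by_cases hi : i = l <;> simp [hD, hi, one_apply]
      · have hsum : ∑ k, A i k * C k j = ∑ k, A i k * (1 : Matrix (Fin (n+3)) (Fin (n+3)) R) k j := by
          apply Finset.sum_congr rfl; intro k _; simp [hC, h0, hL]
        rw [hsum, ← mul_apply, mul_one]
        simp [hD, h0, hL]
  have hmid0 : ∀ k : Fin (n + 1), (k.succ.castSucc : Fin (n + 3)) ≠ 0 := by
    intro k; simp [Fin.ext_iff, -Fin.val_eq_zero_iff]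
  have hmidl : ∀ k : Fin (n + 1), (k.succ.castSucc : Fin (n + 3)) ≠ l := by
    intro k; simp [hl, Fin.ext_iff, -Fin.val_eq_zero_iff]; omega
  -- determinant of C
  have hdetC : C.det = adjugate A 0 0 * adjugate A l l - adjugate A 0 l * adjugate A l 0 := by
    rw [← det_submatrix_equiv_self (myE n) C]
    have hblock : C.submatrix (myE n) (myE n) =
        fromBlocks !![adjugate A 0 0, adjugate A 0 l; adjugate A l 0, adjugate A l l] 0
          (fun k a => if a = 0 then adjugate A k.succ.castSucc 0 else adjugate A k.succ.castSucc l)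
          (1 : Matrix (Fin (n+1)) (Fin (n+1)) R) := by
      ext i j
      rcases i with a | k <;> rcases j with b | m
      · fin_cases a <;> fin_cases b <;>
          simp [myE, submatrix, fromBlocks, hC, hl0, h0l, hl, Fin.ext_iff, -Fin.val_eq_zero_iff, Fin.val_last]
      · have hm2 : ¬ ((m : ℕ) + 1 = n + 2) := by omega
        have hm3 : ¬ (n + 1 = (m : ℕ)) := by omega
        fin_cases a <;>
          simp [myE, submatrix, fromBlocks, hC, hmid0 m, hmidl m, m.isLt.ne, one_apply, hl, Fin.ext_iff, -Fin.val_eq_zero_iff, Fin.val_last, hm2, hm3]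
      · fin_cases b <;> simp [myE, submatrix, fromBlocks, hC, hl0, hl, Fin.ext_iff, -Fin.val_eq_zero_iff, Fin.val_last]
      · have hm2 : ¬ ((m : ℕ) + 1 = n + 2) := by omega
        simp [myE, submatrix, fromBlocks, hC, hmid0 m, hmidl m, m.isLt.ne, one_apply, hl, Fin.ext_iff, -Fin.val_eq_zero_iff, Fin.val_last, hm2,
          add_left_inj]
    rw [hblock]; erw [det_fromBlocks_zero₁₂, det_one, mul_one, det_fin_two_of]
  -- determinant of D
  have hdetD : D.det = A.det * A.det * (A.submatrix (fun k : Fin (n + 1) => k.succ.castSucc)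
      (fun k : Fin (n + 1) => k.succ.castSucc)).det := by
    rw [← det_submatrix_equiv_self (myE n) D]
    have hblock : D.submatrix (myE n) (myE n) =
        fromBlocks !![A.det, 0; 0, A.det]
          (fun a m => A (if a = 0 then 0 else l) m.succ.castSucc) 0
          (A.submatrix (fun k : Fin (n + 1) => k.succ.castSucc)
            (fun k : Fin (n + 1) => k.succ.castSucc)) := by
      ext i j
      rcases i with a | k <;> rcases j with b | m
      · fin_cases a <;> fin_cases b <;>
          simp [myE, submatrix, fromBlocks, hD, h0l, hl0, hl, Fin.ext_iff, -Fin.val_eq_zero_iff, Fin.val_last]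
      · fin_cases a <;> simp [myE, submatrix, fromBlocks, hD, hmid0 m, hmidl m, -Fin.castSucc_succ] <;> rfl
      · have hk2 : ¬ ((k : ℕ) + 1 = n + 2) := by omega
        have hk3 : ¬ ((k : ℕ) = n + 1) := by omega
        fin_cases b <;>
          simp [myE, submatrix, fromBlocks, hD, hmid0 k, hmidl k, hl, Fin.ext_iff, -Fin.val_eq_zero_iff, Fin.val_last, hk2, hk3]
      · simp [myE, submatrix, fromBlocks, hD, hmid0 m, hmidl m, -Fin.castSucc_succ]
    rw [hblock]; erw [det_fromBlocks_zero₂₁, det_fin_two_of]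
    ring
  have hdets : A.det * C.det = D.det := by rw [← det_mul, hmul]
  rw [hdetC, hdetD] at hdets
  -- rewrite adjugate entries as minors
  have e00 : adjugate A 0 0 = (A.submatrix (fun k : Fin (n + 2) => k.succ)
      (fun k : Fin (n + 2) => k.succ)).det := by
    rw [adjugate_fin_succ_eq_det_submatrix]
    simp [Fin.succAbove_zero]
  have ell : adjugate A l l = (A.submatrix (fun k : Fin (n + 2) => k.castSucc)
      (fun k : Fin (n + 2) => k.castSucc)).det := by
    rw [adjugate_fin_succ_eq_det_submatrix]
    have hev : ((-1 : R) ^ ((l : ℕ) + (l : ℕ))) = 1 := Even.neg_one_pow ⟨(l : ℕ), rfl⟩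
    rw [hev, one_mul, hl, Fin.succAbove_last]
  have e0l : adjugate A 0 l = (-1 : R) ^ (n + 2) * (A.submatrix (fun k : Fin (n + 2) => k.castSucc)
      (fun k : Fin (n + 2) => k.succ)).det := by
    rw [adjugate_fin_succ_eq_det_submatrix, hl, Fin.succAbove_last, Fin.succAbove_zero]
    norm_num [Fin.val_last]
  have el0 : adjugate A l 0 = (-1 : R) ^ (n + 2) * (A.submatrix (fun k : Fin (n + 2) => k.succ)
      (fun k : Fin (n + 2) => k.castSucc)).det := by
    rw [adjugate_fin_succ_eq_det_submatrix, hl, Fin.succAbove_last, Fin.succAbove_zero]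
    norm_num [Fin.val_last]
  rw [e00, ell, e0l, el0] at hdets
  have hsq : ((-1 : R) ^ (n + 2)) * ((-1 : R) ^ (n + 2)) = 1 := by
    rw [← pow_add]
    exact Even.neg_one_pow ⟨n + 2, rfl⟩
  linear_combination (-1 : R) * hdets -
    (A.det * ((A.submatrix (fun k : Fin (n + 2) => k.castSucc) (fun k : Fin (n + 2) => k.succ)).det *
      (A.submatrix (fun k : Fin (n + 2) => k.succ) (fun k : Fin (n + 2) => k.castSucc)).det)) * hsq

end Aux

/-- Desnanot–Jacobi (Dodgson condensation), stated for matrices of size `n + 3 ≥ 3`. -/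
theorem stmt_5 (n : ℕ) (A : Matrix (Fin (n + 3)) (Fin (n + 3)) ℝ) :
    A.det * (A.submatrix (fun k : Fin (n + 1) => k.succ.castSucc)
        (fun k : Fin (n + 1) => k.succ.castSucc)).det =
      (A.submatrix (fun k : Fin (n + 2) => k.castSucc) (fun k : Fin (n + 2) => k.castSucc)).det *
          (A.submatrix (fun k : Fin (n + 2) => k.succ) (fun k : Fin (n + 2) => k.succ)).det -
        (A.submatrix (fun k : Fin (n + 2) => k.castSucc) (fun k : Fin (n + 2) => k.succ)).det *
          (A.submatrix (fun k : Fin (n + 2) => k.succ) (fun k : Fin (n + 2) => k.castSucc)).det := by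
  classical
  set R := MvPolynomial (Fin (n + 3) × Fin (n + 3)) ℤ with hR
  set G : Matrix (Fin (n + 3)) (Fin (n + 3)) R := fun i j => MvPolynomial.X (i, j) with hG
  have hGdet : G.det ≠ 0 := by
    intro h
    have h2 := congrArg (MvPolynomial.eval₂Hom (Int.castRingHom ℝ)
      (fun p : Fin (n+3) × Fin (n+3) => if p.1 = p.2 then (1 : ℝ) else 0)) h
    rw [RingHom.map_det, map_zero, RingHom.mapMatrix_apply] at h2
    have h3 : G.map (MvPolynomial.eval₂Hom (Int.castRingHom ℝ)
        (fun p : Fin (n+3) × Fin (n+3) => if p.1 = p.2 then (1 : ℝ) else 0)) = 1 := by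
      ext i j
      simp [hG, Matrix.map, one_apply, MvPolynomial.eval₂Hom_X', MvPolynomial.eval₂_X]
    rw [h3, det_one] at h2
    exact one_ne_zero h2
  have key := dodgson_mul n G
  have hcancel := mul_left_cancel₀ hGdet key
  set φ : R →+* ℝ := MvPolynomial.eval₂Hom (Int.castRingHom ℝ)
    (fun p : Fin (n+3) × Fin (n+3) => A p.1 p.2) with hφ
  have hmapG : G.map φ = A := by
    ext i j
    show φ (MvPolynomial.X (i, j)) = A i j
    rw [hφ]
    exact MvPolynomial.eval₂Hom_X' _ _ _
  have h2 := congrArg φ hcancel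
  simp only [_root_.map_mul, map_sub, RingHom.map_det, RingHom.mapMatrix_apply,
    ← submatrix_map, hmapG] at h2
  exact h2
end

section
/- (Johnson's conjecture) Let n ≥ 2 and let A be an n×n real Toeplitz matrix satisfying A + Aᵀ = 2·J_n, where J_n is the all-ones matrix. Then det A_{n-1}(1,2) + det A_{n-1}(2,1) = 2·det A_{n-1}(1,1). -/
open Matrix

variable {R : Type*} [CommRing R]

/-- skew Toeplitz matrix from parameters `b 0 = b₁, b 1 = b₂, ...` -/
def Bm (N : ℕ) (b : ℕ → R) : Matrix (Fin N) (Fin N) R :=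
  Matrix.of fun i j => if (i:ℕ) < j then b ((j:ℕ) - i - 1)
    else if (j:ℕ) < i then - b ((i:ℕ) - j - 1) else 0

def Am (N : ℕ) (b : ℕ → R) : Matrix (Fin N) (Fin N) R :=
  Bm N b + Matrix.of fun _ _ => 1

lemma Bm_apply (N : ℕ) (b : ℕ → R) (i j : Fin N) :
    Bm N b i j = if (i:ℕ) < j then b ((j:ℕ) - i - 1)
      else if (j:ℕ) < i then - b ((i:ℕ) - j - 1) else 0 := rfl

lemma Am_apply (N : ℕ) (b : ℕ → R) (i j : Fin N) :
    Am N b i j = Bm N b i j + 1 := rfl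

lemma Bm_skew (N : ℕ) (b : ℕ → R) : (Bm N b)ᵀ = - Bm N b := by
  ext i j
  simp only [transpose_apply, Matrix.neg_apply, Bm_apply]
  rcases lt_trichotomy (i:ℕ) (j:ℕ) with h | h | h
  · rw [if_neg (by omega), if_pos h, if_pos h]
  · rw [if_neg (by omega), if_neg (by omega), if_neg (by omega), if_neg (by omega), neg_zero]
  · rw [if_pos h, if_neg (by omega), if_pos h, neg_neg]

lemma Bm_rev (N : ℕ) (b : ℕ → R) :
    (Bm N b).submatrix Fin.rev Fin.rev = (Bm N b)ᵀ := by
  ext i j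
  have hi := i.isLt; have hj := j.isLt
  simp only [submatrix_apply, transpose_apply, Bm_apply, Fin.val_rev]
  rcases lt_trichotomy (i:ℕ) (j:ℕ) with h | h | h
  · rw [if_neg (by omega), if_pos (by omega), if_neg (by omega), if_pos h]
    congr 2; omega
  · rw [if_neg (by omega), if_neg (by omega), if_neg (by omega), if_neg (by omega)]
  · rw [if_pos (by omega), if_pos h]
    congr 1; omega

lemma Bm_shift (N : ℕ) (b : ℕ → R) :
    (Bm (N+1) b).submatrix Fin.succ Fin.succ
      = (Bm (N+1) b).submatrix Fin.castSucc Fin.castSucc := by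
  ext i j
  simp only [submatrix_apply, Bm_apply, Fin.val_succ, Fin.coe_castSucc]
  rcases lt_trichotomy (i:ℕ) (j:ℕ) with h | h | h
  · rw [if_pos (by omega), if_pos h]; congr 1; omega
  · rw [if_neg (by omega), if_neg (by omega), if_neg (by omega), if_neg (by omega)]
  · rw [if_neg (by omega), if_pos (by omega), if_neg (by omega), if_pos h]
    congr 2; omega

lemma Bm_map {S : Type*} [CommRing S] (f : R →+* S) (N : ℕ) (b : ℕ → R) :
    (Bm N b).map f = Bm N (fun t => f (b t)) := by
  ext i j
  simp only [map_apply, Bm_apply, apply_ite f, map_neg, map_zero]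

lemma Am_map {S : Type*} [CommRing S] (f : R →+* S) (N : ℕ) (b : ℕ → R) :
    (Am N b).map f = Am N (fun t => f (b t)) := by
  ext i j
  simp only [map_apply, Am_apply, map_add, _root_.map_one, Bm_apply, apply_ite f, map_neg, map_zero]
variable {R : Type*} [CommRing R] {m : ℕ}

lemma det_updateRow_single (M : Matrix (Fin (m+1)) (Fin (m+1)) R) (r c : Fin (m+1)) :
    det (M.updateRow r (Pi.single c 1)) =
      (-1)^((r:ℕ)+(c:ℕ)) * det (M.submatrix r.succAbove c.succAbove) := by
  rw [det_succ_row _ r]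
  rw [Finset.sum_eq_single c]
  · rw [updateRow_self, Pi.single_eq_same, mul_one, submatrix_updateRow_succAbove]
  · intro j _ hj
    rw [updateRow_self, Pi.single_eq_of_ne hj, mul_zero, zero_mul]
  · intro h; exact absurd (Finset.mem_univ c) h

lemma Am_shift (N : ℕ) (b : ℕ → R) :
    (Am (N+1) b).submatrix Fin.succ Fin.succ
      = (Am (N+1) b).submatrix Fin.castSucc Fin.castSucc := by
  have h := Bm_shift N b
  ext i j
  have h' := congrFun (congrFun h i) j
  simp only [submatrix_apply, Am_apply] at *
  rw [h']

section RealCase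
variable {n : ℕ}

lemma skew_inv_transpose (B : Matrix (Fin (n+1)) (Fin (n+1)) ℝ) (hsk : Bᵀ = -B)
    (hB : IsUnit B.det) : (B⁻¹)ᵀ = -(B⁻¹) := by
  have h1 : (-(B⁻¹)) * Bᵀ = 1 := by
    rw [hsk, Matrix.neg_mul, Matrix.mul_neg, neg_neg, Matrix.nonsing_inv_mul _ hB]
  rw [Matrix.transpose_nonsing_inv]
  exact Matrix.inv_eq_left_inv h1

lemma even_case (n : ℕ) (hn : Odd (n+1)) (b : ℕ → ℝ) (hB : (Bm (n+2) b).det ≠ 0) :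
    ((Am (n+2) b).submatrix Fin.castSucc Fin.succ).det
      + ((Am (n+2) b).submatrix Fin.succ Fin.castSucc).det
      - 2 * ((Am (n+2) b).submatrix Fin.castSucc Fin.castSucc).det = 0 := by
  set B := Bm (n+2) b with hBdef
  set A := Am (n+2) b with hAdef
  have hsk : Bᵀ = -B := Bm_skew _ _
  have hU : IsUnit B.det := isUnit_iff_ne_zero.2 hB
  have hBB : B * B⁻¹ = 1 := Matrix.mul_nonsing_inv _ hU
  have hB'B : B⁻¹ * B = 1 := Matrix.nonsing_inv_mul _ hU
  set r := B⁻¹ with hrdef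
  have hrT : rᵀ = -r := skew_inv_transpose _ hsk hU
  set L : Fin (n+2) := Fin.last (n+1) with hLdef
  have hrev : ∀ i j, r (Fin.rev i) (Fin.rev j) = - r i j := by
    have h2 : (r.submatrix Fin.rev Fin.rev) * (B.submatrix Fin.rev Fin.rev) = 1 := by
      have : (Fin.rev : Fin (n+2) → Fin (n+2)) = ⇑(Fin.revPerm) := rfl
      rw [this, submatrix_mul_equiv, hB'B, submatrix_one_equiv]
    rw [Bm_rev, hsk] at h2
    have h3 : (-(r.submatrix Fin.rev Fin.rev)) * B = 1 := by
      rw [Matrix.neg_mul, ← Matrix.mul_neg, h2]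
    have h4 := Matrix.inv_eq_left_inv h3
    intro i j
    have h5 := congrFun (congrFun h4 i) j
    simp only [Matrix.neg_apply, submatrix_apply, ← hrdef] at h5
    linarith
  set w : Fin (n+2) → ℝ := Pi.single (0 : Fin (n+2)) 1 + Pi.single L 1 with hwdef
  set y : Fin (n+2) → ℝ := r *ᵥ w with hydef
  have hyi : ∀ i, y i = r i 0 + r i L := by
    intro i
    simp [hydef, hwdef, Matrix.mulVec_add, Matrix.mulVec_single]
  have hcol : ∀ j, ∑ i, r i j = - ∑ i, r i (Fin.rev j) := by
    intro j
    have step1 : ∑ i, r (Fin.rev i) j = ∑ i, r i j :=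
      Fintype.sum_equiv Fin.revPerm _ _ (fun i => rfl)
    have step2 : ∀ i : Fin (n+2), r (Fin.rev i) j = - r i (Fin.rev j) := by
      intro i
      have h6 := hrev i (Fin.rev j)
      rwa [Fin.rev_rev] at h6
    rw [← step1, Finset.sum_congr rfl (fun i _ => step2 i), Finset.sum_neg_distrib]
  have h1y : ∑ i, y i = 0 := by
    have h0 : (Fin.rev L) = (0 : Fin (n+2)) := by
      rw [hLdef, Fin.rev_last]
    have := hcol (0 : Fin (n+2))
    rw [show Fin.rev (0 : Fin (n+2)) = L from by rw [← h0, Fin.rev_rev]] at this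
    simp only [hyi, Finset.sum_add_distrib, this, neg_add_cancel]
  have hdiag : ∀ i, r i i = 0 := by
    intro i
    have := congrFun (congrFun hrT i) i
    simp only [transpose_apply, Matrix.neg_apply] at this
    linarith
  have hanti : ∀ i j, r j i = - r i j := by
    intro i j
    have := congrFun (congrFun hrT i) j
    simpa [transpose_apply, Matrix.neg_apply] using this
  have hyw : w ⬝ᵥ y = 0 := by
    have : w ⬝ᵥ y = y 0 + y L := by
      simp [hwdef, add_dotProduct, single_dotProduct]
    rw [this, hyi, hyi, hdiag, hdiag, hanti 0 L]
    ring
  have hAy : A *ᵥ y = w := by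
    have hA2 : A = B + Matrix.of (fun _ _ => (1:ℝ)) := rfl
    rw [hA2, Matrix.add_mulVec, hydef, Matrix.mulVec_mulVec, hBB, Matrix.one_mulVec]
    have hones : (Matrix.of (fun _ _ => (1:ℝ)) : Matrix (Fin (n+2)) (Fin (n+2)) ℝ) *ᵥ y = 0 := by
      funext i
      simp only [Matrix.mulVec, dotProduct, Matrix.of_apply, one_mul]
      exact h1y
    rw [hones, add_zero]
  have hadj : adjugate A *ᵥ w = A.det • y := by
    rw [← hAy, Matrix.mulVec_mulVec, Matrix.adjugate_mul, Matrix.smul_mulVec,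
      Matrix.one_mulVec]
  have key : adjugate A 0 0 + adjugate A 0 L + (adjugate A L 0 + adjugate A L L) = 0 := by
    have h5 : w ⬝ᵥ (adjugate A *ᵥ w) = A.det * (w ⬝ᵥ y) := by
      rw [hadj, dotProduct_smul, smul_eq_mul]
    rw [hyw, mul_zero] at h5
    rw [← h5]
    simp [hwdef, add_dotProduct, single_dotProduct, Matrix.mulVec_add,
      Matrix.mulVec_single]
    ring
  -- translate adjugate entries into minors
  have hL0 : (L : ℕ) = n+1 := rfl
  have hsA : (L.succAbove : Fin (n+1) → Fin (n+2)) = Fin.castSucc := Fin.succAbove_last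
  have hs0 : ((0 : Fin (n+2)).succAbove : Fin (n+1) → Fin (n+2)) = Fin.succ := Fin.succAbove_zero
  have hm1 : ((-1:ℝ))^((L:ℕ)+((0 : Fin (n+2)):ℕ)) = -1 := by
    rw [hL0, Fin.val_zero, add_zero]; exact hn.neg_one_pow
  have hm2 : ((-1:ℝ))^(((0 : Fin (n+2)):ℕ)+(L:ℕ)) = -1 := by
    rw [hL0, Fin.val_zero, zero_add]; exact hn.neg_one_pow
  have hm3 : ((-1:ℝ))^((L:ℕ)+(L:ℕ)) = 1 := by
    rw [hL0]; exact Even.neg_one_pow ⟨n+1, rfl⟩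
  have hm4 : ((-1:ℝ))^(((0 : Fin (n+2)):ℕ)+((0 : Fin (n+2)):ℕ)) = 1 := by
    rw [Fin.val_zero]; norm_num
  have e1 : adjugate A 0 L = - (A.submatrix Fin.castSucc Fin.succ).det := by
    rw [Matrix.adjugate_apply, det_updateRow_single, hsA, hs0, hm1, neg_one_mul]
  have e2 : adjugate A L 0 = - (A.submatrix Fin.succ Fin.castSucc).det := by
    rw [Matrix.adjugate_apply, det_updateRow_single, hs0, hsA, hm2, neg_one_mul]
  have e3 : adjugate A L L = (A.submatrix Fin.castSucc Fin.castSucc).det := by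
    rw [Matrix.adjugate_apply, det_updateRow_single, hsA, hm3, one_mul]
  have e4 : adjugate A 0 0 = (A.submatrix Fin.castSucc Fin.castSucc).det := by
    rw [Matrix.adjugate_apply, det_updateRow_single, hs0, hm4, one_mul]
    exact congrArg Matrix.det (Am_shift (n+1) b)
  rw [e1, e2, e3, e4] at key
  linarith

end RealCase

lemma skew_quad {I : Type*} [Fintype I] (S : Matrix I I ℝ) (h : Sᵀ = -S) (x : I → ℝ) :
    x ⬝ᵥ (S *ᵥ x) = 0 := by
  have h1 : x ⬝ᵥ (S *ᵥ x) = (x ᵥ* S) ⬝ᵥ x := dotProduct_mulVec x S x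
  have h2 : x ᵥ* S = - (S *ᵥ x) := by
    rw [← Matrix.mulVec_transpose, h, Matrix.neg_mulVec]
  rw [h2, neg_dotProduct, dotProduct_comm (S *ᵥ x) x] at h1
  linarith

lemma updateRow_updateRow' {I J : Type*} [DecidableEq I] (M : Matrix I J ℝ) (r : I)
    (v w : J → ℝ) : (M.updateRow r v).updateRow r w = M.updateRow r w := by
  ext i j
  by_cases h : i = r <;> simp [Matrix.updateRow_apply, h]

lemma odd_core (n : ℕ) (hn : Even (n+1)) (b : ℕ → ℝ)
    (hd : ((Bm (n+2) b).submatrix Fin.castSucc Fin.castSucc).det ≠ 0) :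
    ((Bm (n+2) b).submatrix Fin.castSucc Fin.succ).det ^ 2
      = ((Bm (n+2) b).submatrix Fin.castSucc Fin.castSucc).det ^ 2 := by
  set B := Bm (n+2) b with hBdef
  set B₀ := B.submatrix (Fin.castSucc : Fin (n+1) → Fin (n+2)) Fin.castSucc with hB0def
  set C := B.submatrix (Fin.castSucc : Fin (n+1) → Fin (n+2)) Fin.succ with hCdef
  set L : Fin (n+2) := Fin.last (n+1) with hLdef
  have hsk : Bᵀ = -B := Bm_skew _ _
  have hskE : ∀ i j, B j i = - B i j := by
    intro i j
    have := congrFun (congrFun hsk i) j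
    simpa [Matrix.transpose_apply] using this
  have hsk0 : B₀ᵀ = -B₀ := by
    ext i j
    simp only [Matrix.transpose_apply, Matrix.neg_apply, hB0def, Matrix.submatrix_apply]
    exact hskE _ _
  have hU0 : IsUnit B₀.det := isUnit_iff_ne_zero.2 hd
  set c : Fin (n+1) → ℝ := fun i => B (Fin.castSucc i) L with hcdef
  set u : Fin (n+2) → ℝ := Fin.snoc (-(B₀⁻¹ *ᵥ c)) 1 with hudef
  have hu_last : u L = 1 := by
    rw [hudef, hLdef]; exact Fin.snoc_last _ _
  have hu_cast : ∀ i : Fin (n+1), u (Fin.castSucc i) = -(B₀⁻¹ *ᵥ c) i := by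
    intro i; rw [hudef]; exact Fin.snoc_castSucc _ _ _
  have hinvsk : (B₀⁻¹)ᵀ = -(B₀⁻¹) := skew_inv_transpose _ hsk0 hU0
  have hBu : B *ᵥ u = 0 := by
    funext i
    induction i using Fin.lastCases with
    | last =>
      have hsplit : (B *ᵥ u) (Fin.last (n+1)) =
          ∑ j : Fin (n+1), B L (Fin.castSucc j) * u (Fin.castSucc j) + B L L * u L := by
        simp only [Matrix.mulVec, dotProduct, hLdef]
        rw [Fin.sum_univ_castSucc]
      rw [hsplit]
      have hdiag : B L L = 0 := by have := hskE L L; linarith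
      have hterm : ∀ j : Fin (n+1), B L (Fin.castSucc j) * u (Fin.castSucc j)
          = c j * (B₀⁻¹ *ᵥ c) j := by
        intro j
        rw [hu_cast, hskE (Fin.castSucc j) L]
        show -c j * -(B₀⁻¹ *ᵥ c) j = c j * (B₀⁻¹ *ᵥ c) j
        ring
      rw [Finset.sum_congr rfl (fun j _ => hterm j), hdiag, zero_mul, add_zero]
      have := skew_quad _ hinvsk c
      simpa [dotProduct] using this
    | cast i =>
      have hrow : (B *ᵥ u) (Fin.castSucc i) =
          ∑ j : Fin (n+1), B₀ i j * u (Fin.castSucc j) + c i * u L := by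
        simp only [Matrix.mulVec, dotProduct]
        rw [Fin.sum_univ_castSucc]
        rfl
      rw [hrow, hu_last, mul_one]
      have hsum : ∑ j : Fin (n+1), B₀ i j * u (Fin.castSucc j) = - (B₀ *ᵥ (B₀⁻¹ *ᵥ c)) i := by
        simp only [hu_cast]
        simp [Matrix.mulVec, dotProduct, mul_neg, neg_mul, Finset.mul_sum,
          Finset.sum_neg_distrib]
      rw [hsum, Matrix.mulVec_mulVec, Matrix.mul_nonsing_inv _ hU0, Matrix.one_mulVec]
      simp
  -- Identity 1 : det M1 = det M2 * u 0
  set M1 := B.updateRow L (Pi.single (0 : Fin (n+2)) 1) with hM1def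
  set M2 := B.updateRow L (Pi.single L 1) with hM2def
  have hM1u : M1 *ᵥ u = Pi.single L (u 0) := by
    funext i
    by_cases h : i = L
    · subst h
      have : (M1 *ᵥ u) L = Pi.single (0 : Fin (n+2)) (1:ℝ) ⬝ᵥ u := by
        simp only [Matrix.mulVec, hM1def, Matrix.updateRow_self]
      rw [this, single_dotProduct, one_mul]
      simp
    · have hrow : M1 i = B i := Matrix.updateRow_ne h
      have : (M1 *ᵥ u) i = (B *ᵥ u) i := by
        simp only [Matrix.mulVec, hrow]
      rw [this, hBu]
      simp only [Pi.zero_apply, Pi.single_apply]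
      rw [if_neg h]
  have hid1 : M1.det = M2.det * u 0 := by
    have h1 : M1.det • u = adjugate M1 *ᵥ (M1 *ᵥ u) := by
      rw [Matrix.mulVec_mulVec, Matrix.adjugate_mul, Matrix.smul_mulVec,
        Matrix.one_mulVec]
    rw [hM1u, Matrix.mulVec_single] at h1
    have h2 := congrFun h1 L
    simp only [Pi.smul_apply, smul_eq_mul, hu_last, mul_one, op_smul_eq_mul, Matrix.col_apply] at h2
    have h3 : adjugate M1 L L = M2.det := by
      rw [Matrix.adjugate_apply, hM1def, updateRow_updateRow']
    rw [h2, h3]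
  -- Identity 2
  set M3 := B.updateCol (0 : Fin (n+2)) (Pi.single L 1) with hM3def
  have huB : u ᵥ* B = 0 := by
    rw [← Matrix.mulVec_transpose, hsk, Matrix.neg_mulVec, hBu, neg_zero]
  have hM3u : u ᵥ* M3 = Pi.single (0 : Fin (n+2)) 1 := by
    funext j
    by_cases h : j = 0
    · subst h
      have hb : ∀ i, M3 i 0 = (Pi.single L 1 : Fin (n+2) → ℝ) i := by
        intro i; rw [hM3def, Matrix.updateCol_self]
      simp only [Matrix.vecMul, dotProduct]
      have hsum2 : (∑ i, u i * M3 i 0) = ∑ i, u i * (Pi.single L 1 : Fin (n+2) → ℝ) i :=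
        Finset.sum_congr rfl (fun i _ => by rw [hb i])
      rw [hsum2]
      simp only [Pi.single_apply, mul_ite, mul_one, mul_zero]
      rw [Finset.sum_ite_eq' Finset.univ L u]
      simp [hu_last]
    · simp only [Matrix.vecMul, dotProduct]
      have hb : ∀ i, u i * M3 i j = u i * B i j := fun i => by
        rw [hM3def, Matrix.updateCol_ne h]
      rw [Finset.sum_congr rfl (fun i _ => hb i)]
      have := congrFun huB j
      simp only [Matrix.vecMul, dotProduct, Pi.zero_apply] at this
      rw [this]
      simp [Pi.single_apply, h]
  have hid2 : adjugate M3 0 0 = M3.det * u 0 := by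
    have h4 : M3.det • u = (u ᵥ* M3) ᵥ* adjugate M3 := by
      rw [Matrix.vecMul_vecMul, Matrix.mul_adjugate]
      funext j
      simp [Matrix.vecMul, dotProduct, Matrix.smul_apply, Matrix.one_apply,
        mul_comm, Finset.mul_sum]
    rw [hM3u] at h4
    have h5 := congrFun h4 0
    rw [Matrix.single_vecMul] at h5
    simp only [Pi.smul_apply, smul_eq_mul, one_mul] at h5
    exact h5.symm
  -- Translate determinants
  have hM3T : M3ᵀ = Bᵀ.updateRow 0 (Pi.single L 1) := by
    rw [hM3def, Matrix.updateRow_transpose]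
  have hTsubcc : Bᵀ.submatrix Fin.succ Fin.succ = (B.submatrix Fin.succ Fin.succ)ᵀ := rfl
  have hcorner : adjugate M3 0 0 = B₀.det := by
    have e1 : adjugate M3 0 0 = adjugate (M3ᵀ) 0 0 := by
      rw [← Matrix.adjugate_transpose, Matrix.transpose_apply]
    rw [e1, Matrix.adjugate_apply, hM3T, updateRow_updateRow', det_updateRow_single]
    simp only [Fin.val_zero, Nat.add_zero, pow_zero, one_mul, Fin.succAbove_zero]
    rw [hTsubcc, Matrix.det_transpose]
    show ((Bm (n+2) b).submatrix Fin.succ Fin.succ).det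
      = ((Bm (n+2) b).submatrix Fin.castSucc Fin.castSucc).det
    exact congrArg Matrix.det (Bm_shift (n+1) b)
  have hCtrans : Bᵀ.submatrix Fin.succ Fin.castSucc = Cᵀ := rfl
  have hdetM3 : M3.det = C.det := by
    rw [← Matrix.det_transpose, hM3T, det_updateRow_single]
    simp only [hLdef, Fin.val_zero, Nat.zero_add, Fin.succAbove_zero, Fin.succAbove_last,
      Fin.val_last]
    rw [hn.neg_one_pow, one_mul]
    have : Bᵀ.submatrix Fin.succ Fin.castSucc = Cᵀ := rfl
    rw [this, Matrix.det_transpose]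
  have hdetM1 : M1.det = C.det := by
    rw [hM1def, det_updateRow_single]
    simp only [hLdef, Fin.val_zero, Nat.add_zero, Fin.succAbove_zero, Fin.succAbove_last,
      Fin.val_last]
    rw [hn.neg_one_pow, one_mul]
  have hdetM2 : M2.det = B₀.det := by
    rw [hM2def, det_updateRow_single]
    simp only [hLdef, Fin.succAbove_last, Fin.val_last]
    rw [show ((n+1) + (n+1)) = 2*(n+1) from by ring, pow_mul]
    norm_num
    rfl
  have e : C.det = B₀.det * u 0 := by rw [← hdetM1, ← hdetM2]; exact hid1
  have f : C.det * u 0 = B₀.det := by rw [← hdetM3, ← hcorner]; exact hid2.symm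
  calc C.det^2 = (B₀.det * u 0) * C.det := by rw [← e, sq]
  _ = B₀.det * (C.det * u 0) := by ring
  _ = B₀.det * B₀.det := by rw [f]
  _ = B₀.det ^ 2 := (sq _).symm

section Witness
variable {R : Type*} [CommRing R]

def bW : ℕ → R := fun t => if t = 0 then 1 else 0

lemma tri_det : ∀ k : ℕ, (Bm (2*k) (bW : ℕ → R)).det = 1 := by
  intro k
  induction k with
  | zero =>
    have : IsEmpty (Fin (2*0)) := by simp; infer_instance
    exact Matrix.det_isEmpty
  | succ k ih =>
    have h2 : 2*(k+1) = (2*k+1)+1 := by ring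
    rw [h2] at *
    set B := Bm ((2*k+1)+1) (bW : ℕ → R) with hB
    have hcol : ∀ i : Fin ((2*k+1)+1), B i 0 = if (i:ℕ) = 1 then -1 else 0 := by
      intro i
      rw [hB, Bm_apply]
      rw [Fin.val_zero]
      rcases Nat.lt_trichotomy (i:ℕ) 0 with h | h | h
      · omega
      · rw [if_neg (by omega), if_neg (by omega), if_neg (by omega)]
      · rw [if_neg (by omega), if_pos h]
        by_cases h1 : (i:ℕ) = 1
        · rw [if_pos h1, h1]
          simp [bW]
        · rw [if_neg h1]
          simp only [bW]
          rw [if_neg (by omega), neg_zero]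
    have hval : ((1 : Fin ((2*k+1)+1)) : ℕ) = 1 := by
      simp [Fin.val_one]
    rw [Matrix.det_succ_column_zero]
    rw [Finset.sum_eq_single (1 : Fin ((2*k+1)+1))]
    · rw [hcol, if_pos hval, hval]
      set U := B.submatrix (Fin.succAbove 1) Fin.succ with hU
      have hrow : ∀ j : Fin (2*k+1), U 0 j = if (j:ℕ) = 0 then 1 else 0 := by
        intro j
        have h0 : (Fin.succAbove 1 (0 : Fin (2*k+1))) = 0 := by
          rw [Fin.succAbove_of_castSucc_lt]
          · rfl
          · simp [Fin.lt_def]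
        rw [hU]
        simp only [Matrix.submatrix_apply, h0]
        rw [hB, Bm_apply]
        rw [Fin.val_zero, Fin.val_succ]
        rw [if_pos (by omega)]
        have harg : (j:ℕ) + 1 - 0 - 1 = (j:ℕ) := by omega
        rw [harg]
        simp [bW]
      rw [Matrix.det_succ_row_zero]
      rw [Finset.sum_eq_single (0 : Fin (2*k+1))]
      · rw [hrow, if_pos (by simp), Fin.val_zero, pow_zero, one_mul, one_mul]
        have hsub : U.submatrix Fin.succ (Fin.succAbove 0) = Bm (2*k) (bW : ℕ → R) := by
          ext i j
          have hr : (Fin.succAbove (1 : Fin ((2*k+1)+1)) (Fin.succ i) : ℕ) = (i:ℕ) + 2 := by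
            rw [Fin.succAbove_of_le_castSucc]
            · simp [Fin.val_succ]
            · simp [Fin.le_def, Fin.val_succ]
          have hc : ((Fin.succ ((Fin.succAbove (0 : Fin (2*k+1))) j)) : ℕ) = (j:ℕ) + 2 := by
            simp [Fin.succAbove, Fin.val_succ]
          simp only [hU, Matrix.submatrix_apply]
          rw [hB, Bm_apply, Bm_apply]
          rcases Nat.lt_trichotomy (i:ℕ) (j:ℕ) with h | h | h
          · rw [if_pos (by omega), if_pos (by omega)]
            congr 1; omega
          · rw [if_neg (by omega), if_neg (by omega), if_neg (by omega), if_neg (by omega)]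
          · rw [if_neg (by omega), if_pos (by omega), if_neg (by omega), if_pos (by omega)]
            congr 2; omega
        rw [hsub, ih]
        norm_num
      · intro j _ hj
        rw [hrow, if_neg (fun hh => hj (Fin.ext_iff.mpr (by rw [hh, Fin.val_zero]))), mul_zero,
          zero_mul]
      · intro h; exact absurd (Finset.mem_univ _) h
    · intro i _ hi
      rw [hcol, if_neg (fun hh => hi (Fin.ext_iff.mpr (by rw [hh, hval]))), mul_zero, zero_mul]
    · intro h; exact absurd (Finset.mem_univ _) h

lemma tri_C (N : ℕ) :
    ((Bm (N+1) (bW : ℕ → R)).submatrix Fin.castSucc Fin.succ).det = 1 := by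
  set C := (Bm (N+1) (bW : ℕ → R)).submatrix (Fin.castSucc : Fin N → Fin (N+1)) Fin.succ with hC
  have htri : C.BlockTriangular OrderDual.toDual := by
    intro i j hij
    have h : (i:ℕ) < (j:ℕ) := hij
    rw [hC]
    simp only [Matrix.submatrix_apply]
    rw [Bm_apply, if_pos (by simp only [Fin.val_succ, Fin.coe_castSucc]; omega)]
    simp only [Fin.val_succ, Fin.coe_castSucc, bW]
    rw [if_neg (by omega)]
  rw [Matrix.det_of_lowerTriangular C htri]
  apply Finset.prod_eq_one
  intro i _
  rw [hC]
  simp only [Matrix.submatrix_apply]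
  rw [Bm_apply, if_pos (by simp only [Fin.val_succ, Fin.coe_castSucc]; omega)]
  simp only [Fin.val_succ, Fin.coe_castSucc, bW]
  rw [if_pos (by omega)]

lemma Bm_corner (N : ℕ) (b : ℕ → R) :
    (Bm (N+1) b).submatrix Fin.castSucc Fin.castSucc = Bm N b := by
  ext i j
  simp only [Matrix.submatrix_apply, Bm_apply, Fin.coe_castSucc]

end Witness

section OddFinal

lemma ones_eq_col_mul_row (m : ℕ) :
    (Matrix.of (fun _ _ => (1:ℝ)) : Matrix (Fin m) (Fin m) ℝ)
      = Matrix.replicateCol Unit (fun _ => (1:ℝ)) * Matrix.replicateRow Unit (fun _ => (1:ℝ)) := by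
  ext i j
  simp [Matrix.mul_apply, Matrix.replicateCol, Matrix.replicateRow]

lemma det_add_ones (m : ℕ) (M : Matrix (Fin m) (Fin m) ℝ) (hM : IsUnit M.det) :
    (M + Matrix.of (fun _ _ => (1:ℝ))).det
      = M.det * (1 + (fun _ => (1:ℝ)) ⬝ᵥ (M⁻¹ *ᵥ (fun _ => (1:ℝ)))) := by
  rw [ones_eq_col_mul_row, Matrix.det_add_replicateCol_mul_replicateRow hM]
  congr 1
  rw [Matrix.det_unique]
  simp only [Matrix.add_apply, Matrix.one_apply_eq]
  congr 1
  rw [← Matrix.replicateRow_vecMul, Matrix.replicateRow_mul_replicateCol_apply]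
  exact (dotProduct_mulVec _ _ _).symm

lemma odd_final (n : ℕ) (hn : Even (n+1)) (b : ℕ → ℝ)
    (hd : ((Bm (n+2) b).submatrix Fin.castSucc Fin.castSucc).det ≠ 0)
    (hcd : ((Bm (n+2) b).submatrix Fin.castSucc Fin.succ).det
         = ((Bm (n+2) b).submatrix Fin.castSucc Fin.castSucc).det) :
    ((Am (n+2) b).submatrix Fin.castSucc Fin.succ).det
      + ((Am (n+2) b).submatrix Fin.succ Fin.castSucc).det
      - 2 * ((Am (n+2) b).submatrix Fin.castSucc Fin.castSucc).det = 0 := by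
  set B := Bm (n+2) b with hBdef
  set B₀ := B.submatrix (Fin.castSucc : Fin (n+1) → Fin (n+2)) Fin.castSucc with hB0def
  set C := B.submatrix (Fin.castSucc : Fin (n+1) → Fin (n+2)) Fin.succ with hCdef
  have hsk : Bᵀ = -B := Bm_skew _ _
  have hskE : ∀ i j, B j i = - B i j := by
    intro i j
    have := congrFun (congrFun hsk i) j
    simpa [Matrix.transpose_apply] using this
  have hsk0 : B₀ᵀ = -B₀ := by
    ext i j
    simp only [Matrix.transpose_apply, Matrix.neg_apply, hB0def, Matrix.submatrix_apply]
    exact hskE _ _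
  have hU0 : IsUnit B₀.det := isUnit_iff_ne_zero.2 hd
  have hUC : IsUnit C.det := isUnit_iff_ne_zero.2 (by rw [hcd]; exact hd)
  have hinvsk0 : (B₀⁻¹)ᵀ = -(B₀⁻¹) := skew_inv_transpose _ hsk0 hU0
  -- window decompositions
  have hcc : (Am (n+2) b).submatrix Fin.castSucc Fin.castSucc
      = B₀ + Matrix.of (fun _ _ => (1:ℝ)) := by
    ext i j
    simp [Am_apply, Matrix.submatrix_apply, Matrix.add_apply, hB0def, hBdef]
  have hcs : (Am (n+2) b).submatrix Fin.castSucc Fin.succ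
      = C + Matrix.of (fun _ _ => (1:ℝ)) := by
    ext i j
    simp [Am_apply, Matrix.submatrix_apply, Matrix.add_apply, hCdef, hBdef]
  have hsc : (Am (n+2) b).submatrix Fin.succ Fin.castSucc
      = -Cᵀ + Matrix.of (fun _ _ => (1:ℝ)) := by
    ext i j
    simp only [Matrix.submatrix_apply, Am_apply, Matrix.add_apply, Matrix.neg_apply,
      Matrix.transpose_apply, hCdef, Matrix.of_apply]
    rw [← hBdef, hskE (Fin.castSucc j) (Fin.succ i)]
  -- M11
  have hM11 : ((Am (n+2) b).submatrix Fin.castSucc Fin.castSucc).det = B₀.det := by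
    rw [hcc, det_add_ones _ _ hU0, skew_quad _ hinvsk0, add_zero, mul_one]
  -- M12
  set s : ℝ := (fun _ => (1:ℝ)) ⬝ᵥ (C⁻¹ *ᵥ (fun _ => (1:ℝ))) with hsdef
  have hM12 : ((Am (n+2) b).submatrix Fin.castSucc Fin.succ).det = C.det * (1 + s) := by
    rw [hcs, det_add_ones _ _ hUC]
  -- M21
  have hnegC : IsUnit (-C).det := by
    rw [Matrix.det_neg]
    simpa [Fintype.card_fin, hn.neg_one_pow] using hUC
  have hinvneg : (-C)⁻¹ = -(C⁻¹) := by
    apply Matrix.inv_eq_left_inv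
    rw [Matrix.neg_mul, Matrix.mul_neg, neg_neg, Matrix.nonsing_inv_mul _ hUC]
  have hM21 : ((Am (n+2) b).submatrix Fin.succ Fin.castSucc).det = C.det * (1 - s) := by
    have htr : (-Cᵀ + Matrix.of (fun _ _ => (1:ℝ)) : Matrix (Fin (n+1)) (Fin (n+1)) ℝ)
        = (-C + Matrix.of (fun _ _ => (1:ℝ)))ᵀ := by
      ext i j
      simp [Matrix.transpose_apply, Matrix.add_apply, Matrix.neg_apply]
    rw [hsc, htr, Matrix.det_transpose, det_add_ones _ _ hnegC, hinvneg, Matrix.det_neg]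
    rw [Matrix.neg_mulVec, dotProduct_neg]
    simp only [Fintype.card_fin, hn.neg_one_pow, one_mul, ← hsdef]
    ring
  rw [hM11, hM12, hM21, hcd]
  ring

end OddFinal

section PolyGlue

open MvPolynomial

noncomputable def XX : ℕ → MvPolynomial ℕ ℝ := MvPolynomial.X

lemma evalBm (N : ℕ) (x : ℕ → ℝ) :
    (Matrix.map (Bm N XX) (MvPolynomial.eval x)) = Bm N x := by
  rw [Bm_map]
  funext t
  simp [XX]


lemma evalAm (N : ℕ) (x : ℕ → ℝ) :
    (Matrix.map (Am N XX) (MvPolynomial.eval x)) = Am N x := by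
  rw [Am_map]
  funext t
  simp [XX]

lemma eval_det_sub {N m : ℕ} (M : Matrix (Fin N) (Fin N) (MvPolynomial ℕ ℝ)) (x : ℕ → ℝ)
    (f g : Fin m → Fin N) :
    MvPolynomial.eval x ((M.submatrix f g).det) = (((M.map (MvPolynomial.eval x)).submatrix f g)).det := by
  rw [RingHom.map_det]
  rfl

lemma evalDet' {N : ℕ} (M : Matrix (Fin N) (Fin N) (MvPolynomial ℕ ℝ)) (x : ℕ → ℝ) :
    MvPolynomial.eval x (M.det) = (M.map (MvPolynomial.eval x)).det := by
  rw [RingHom.map_det]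
  rfl

lemma G_zero_even (n : ℕ) (he : Even n) (b : ℕ → ℝ) :
    ((Am (n+2) b).submatrix Fin.castSucc Fin.succ).det
      + ((Am (n+2) b).submatrix Fin.succ Fin.castSucc).det
      - 2 * ((Am (n+2) b).submatrix Fin.castSucc Fin.castSucc).det = 0 := by
  have hn : Odd (n+1) := he.add_one
  set p : MvPolynomial ℕ ℝ := ((Am (n+2) XX).submatrix Fin.castSucc Fin.succ).det
      + ((Am (n+2) XX).submatrix Fin.succ Fin.castSucc).det
      - 2 * ((Am (n+2) XX).submatrix Fin.castSucc Fin.castSucc).det with hpdef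
  set q : MvPolynomial ℕ ℝ := (Bm (n+2) XX).det with hqdef
  have hevalp : ∀ x : ℕ → ℝ, MvPolynomial.eval x p
      = ((Am (n+2) x).submatrix Fin.castSucc Fin.succ).det
        + ((Am (n+2) x).submatrix Fin.succ Fin.castSucc).det
        - 2 * ((Am (n+2) x).submatrix Fin.castSucc Fin.castSucc).det := by
    intro x
    rw [hpdef]
    rw [map_sub, map_add, _root_.map_mul, eval_det_sub, eval_det_sub, eval_det_sub, evalAm]
    norm_num
  have hevalq : ∀ x : ℕ → ℝ, MvPolynomial.eval x q = (Bm (n+2) x).det := by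
    intro x
    rw [hqdef, evalDet', evalBm]
  have hpq : p * q = 0 := by
    apply MvPolynomial.funext
    intro x
    rw [_root_.map_mul, hevalp, hevalq, map_zero]
    by_cases hx : (Bm (n+2) x).det = 0
    · rw [hx, mul_zero]
    · rw [even_case n hn x hx, zero_mul]
  have hq0 : q ≠ 0 := by
    intro hq
    have := hevalq (bW : ℕ → ℝ)
    rw [hq, map_zero] at this
    obtain ⟨k, hk⟩ := he
    have h22 : n + 2 = 2*(k+1) := by omega
    have htd := tri_det (R := ℝ) (k+1)
    rw [← h22] at htd
    rw [htd] at this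
    norm_num at this
  have hp0 : p = 0 := by
    rcases mul_eq_zero.mp hpq with h | h
    · exact h
    · exact absurd h hq0
  have := hevalp b
  rw [hp0, map_zero] at this
  linarith

lemma G_zero_odd (n : ℕ) (ho : Odd n) (b : ℕ → ℝ) :
    ((Am (n+2) b).submatrix Fin.castSucc Fin.succ).det
      + ((Am (n+2) b).submatrix Fin.succ Fin.castSucc).det
      - 2 * ((Am (n+2) b).submatrix Fin.castSucc Fin.castSucc).det = 0 := by
  have hev : Even (n+1) := ho.add_one
  set cp : MvPolynomial ℕ ℝ := ((Bm (n+2) XX).submatrix Fin.castSucc Fin.succ).det with hcpdef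
  set dp : MvPolynomial ℕ ℝ := ((Bm (n+2) XX).submatrix Fin.castSucc Fin.castSucc).det with hdpdef
  have hevalc : ∀ x : ℕ → ℝ, MvPolynomial.eval x cp
      = ((Bm (n+2) x).submatrix Fin.castSucc Fin.succ).det := by
    intro x; rw [hcpdef, eval_det_sub, evalBm]
  have hevald : ∀ x : ℕ → ℝ, MvPolynomial.eval x dp
      = ((Bm (n+2) x).submatrix Fin.castSucc Fin.castSucc).det := by
    intro x; rw [hdpdef, eval_det_sub, evalBm]
  -- witness values
  obtain ⟨k, hk⟩ := ho
  have h21 : n + 1 = 2*(k+1) := by omega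
  have hdW : ((Bm (n+2) (bW : ℕ → ℝ)).submatrix Fin.castSucc Fin.castSucc).det = 1 := by
    have hcor : (Bm (n+2) (bW : ℕ → ℝ)).submatrix Fin.castSucc Fin.castSucc
        = Bm (n+1) (bW : ℕ → ℝ) := Bm_corner (n+1) _
    rw [hcor]
    have htd := tri_det (R := ℝ) (k+1)
    rw [← h21] at htd
    exact htd
  have hcW : ((Bm (n+2) (bW : ℕ → ℝ)).submatrix Fin.castSucc Fin.succ).det = 1 := tri_C (n+1)
  -- key product identity
  have hkey : (cp - dp) * ((cp + dp) * dp) = 0 := by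
    apply MvPolynomial.funext
    intro x
    rw [_root_.map_mul, _root_.map_mul, map_sub, map_add, hevalc, hevald, map_zero]
    by_cases hx : ((Bm (n+2) x).submatrix Fin.castSucc Fin.castSucc).det = 0
    · rw [hx, mul_zero, mul_zero]
    · have hsq := odd_core n hev x hx
      linear_combination ((Bm (n+2) x).submatrix Fin.castSucc Fin.castSucc).det * hsq
  have hdp0 : dp ≠ 0 := by
    intro h
    have := hevald (bW : ℕ → ℝ)
    rw [h, map_zero, hdW] at this
    norm_num at this
  have hsum0 : cp + dp ≠ 0 := by
    intro h
    have := congrArg (MvPolynomial.eval (bW : ℕ → ℝ)) h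
    rw [map_add, hevalc, hevald, hdW, hcW, map_zero] at this
    norm_num at this
  have hcd : cp = dp := by
    rcases mul_eq_zero.mp hkey with h | h
    · exact sub_eq_zero.mp h
    · rcases mul_eq_zero.mp h with h' | h'
      · exact absurd h' hsum0
      · exact absurd h' hdp0
  have hcd_all : ∀ x : ℕ → ℝ, ((Bm (n+2) x).submatrix Fin.castSucc Fin.succ).det
      = ((Bm (n+2) x).submatrix Fin.castSucc Fin.castSucc).det := by
    intro x
    have := congrArg (MvPolynomial.eval x) hcd
    rwa [hevalc, hevald] at this
  -- final polynomial
  set p : MvPolynomial ℕ ℝ := ((Am (n+2) XX).submatrix Fin.castSucc Fin.succ).det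
      + ((Am (n+2) XX).submatrix Fin.succ Fin.castSucc).det
      - 2 * ((Am (n+2) XX).submatrix Fin.castSucc Fin.castSucc).det with hpdef
  have hevalp : ∀ x : ℕ → ℝ, MvPolynomial.eval x p
      = ((Am (n+2) x).submatrix Fin.castSucc Fin.succ).det
        + ((Am (n+2) x).submatrix Fin.succ Fin.castSucc).det
        - 2 * ((Am (n+2) x).submatrix Fin.castSucc Fin.castSucc).det := by
    intro x
    rw [hpdef]
    rw [map_sub, map_add, _root_.map_mul, eval_det_sub, eval_det_sub, eval_det_sub, evalAm]
    norm_num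
  have hpq : p * dp = 0 := by
    apply MvPolynomial.funext
    intro x
    rw [_root_.map_mul, hevalp, hevald, map_zero]
    by_cases hx : ((Bm (n+2) x).submatrix Fin.castSucc Fin.castSucc).det = 0
    · rw [hx, mul_zero]
    · rw [odd_final n hev x hx (hcd_all x), zero_mul]
  have hp0 : p = 0 := by
    rcases mul_eq_zero.mp hpq with h | h
    · exact h
    · exact absurd h hdp0
  have := hevalp b
  rw [hp0, map_zero] at this
  linarith

lemma G_zero (n : ℕ) (b : ℕ → ℝ) :
    ((Am (n+2) b).submatrix Fin.castSucc Fin.succ).det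
      + ((Am (n+2) b).submatrix Fin.succ Fin.castSucc).det
      - 2 * ((Am (n+2) b).submatrix Fin.castSucc Fin.castSucc).det = 0 := by
  rcases Nat.even_or_odd n with h | h
  · exact G_zero_even n h b
  · exact G_zero_odd n h b

end PolyGlue

/-- Johnson's conjecture, stated for matrices of size `n + 2 ≥ 2`. -/
theorem stmt_6 (n : ℕ) (A : Matrix (Fin (n + 2)) (Fin (n + 2)) ℝ)
    (hToeplitz : ∀ i j i' j' : Fin (n + 2),
      (i : ℕ) + (j' : ℕ) = (i' : ℕ) + (j : ℕ) → A i j = A i' j')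
    (hsym : A + Aᵀ = (2 : ℝ) • Matrix.of (fun _ _ => (1 : ℝ))) :
    (A.submatrix Fin.castSucc Fin.succ).det + (A.submatrix Fin.succ Fin.castSucc).det =
      2 * (A.submatrix Fin.castSucc Fin.castSucc).det := by
  have hsymE : ∀ i j, A i j + A j i = 2 := by
    intro i j
    have := congrFun (congrFun hsym i) j
    simpa [Matrix.add_apply, Matrix.transpose_apply, Matrix.smul_apply] using this
  set b : ℕ → ℝ := fun t => if h : t + 1 < n + 2 then A 0 ⟨t+1, h⟩ - 1 else 0 with hbdef
  have hbval : ∀ (t : ℕ) (h : t + 1 < n + 2), b t = A 0 ⟨t+1, h⟩ - 1 := by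
    intro t h
    rw [hbdef]
    exact dif_pos h
  have hA : A = Am (n+2) b := by
    ext i j
    rw [Am_apply, Bm_apply]
    rcases lt_trichotomy (i:ℕ) (j:ℕ) with h | h | h
    · rw [if_pos h]
      have harg : (j:ℕ) - (i:ℕ) - 1 + 1 < n + 2 := by
        have := j.isLt; omega
      rw [hbval _ harg]
      have hfix : (⟨(j:ℕ) - (i:ℕ) - 1 + 1, harg⟩ : Fin (n+2))
          = ⟨(j:ℕ) - (i:ℕ), by have := j.isLt; omega⟩ := by
        apply Fin.ext
        simp only
        omega
      have htp : A i j = A 0 ⟨(j:ℕ) - (i:ℕ), by have := j.isLt; omega⟩ := by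
        apply hToeplitz
        simp only [Fin.val_zero]
        omega
      rw [htp, hfix]
      ring
    · rw [if_neg (by omega), if_neg (by omega)]
      have hii : A i j = A 0 0 := by
        apply hToeplitz
        simp only [Fin.val_zero]
        omega
      have h00 : A 0 0 = 1 := by have := hsymE 0 0; linarith
      rw [hii, h00]
      norm_num
    · rw [if_neg (by omega), if_pos h]
      have harg : (i:ℕ) - (j:ℕ) - 1 + 1 < n + 2 := by
        have := i.isLt; omega
      rw [hbval _ harg]
      have hfix : (⟨(i:ℕ) - (j:ℕ) - 1 + 1, harg⟩ : Fin (n+2))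
          = ⟨(i:ℕ) - (j:ℕ), by have := i.isLt; omega⟩ := by
        apply Fin.ext
        simp only
        omega
      have htp : A j i = A 0 ⟨(i:ℕ) - (j:ℕ), by have := i.isLt; omega⟩ := by
        apply hToeplitz
        simp only [Fin.val_zero]
        omega
      have := hsymE i j
      rw [hfix, ← htp]
      linarith
  rw [hA]
  have := G_zero n b
  linarith
end

section
/- Let B be an n×n real skew-symmetric Toeplitz matrix with n odd. Then det(B_{n-1}(1,1)) = det(B_{n-1}(1,2)), where B_r(i,j) denotes the r×r contiguous submatrix. -/
open Matrix

private lemma aux_toeplitz_skew (m : ℕ) (b : ℤ → ℝ) (hb : ∀ z, b (-z) = -b z) :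
    (Matrix.of fun i j : Fin (2*m+1+1) => b (((j:ℕ):ℤ) - ((i:ℕ):ℤ))).det =
    (Matrix.of fun i j : Fin (2*m+1+1) => b (((j:ℕ):ℤ) - ((i:ℕ):ℤ) + 1)).det := by
  classical
  set M : Matrix (Fin (2*m+1+1)) (Fin (2*m+1+1)) ℝ :=
    Matrix.of (fun i j => b (((j:ℕ):ℤ) - ((i:ℕ):ℤ))) with hMdef
  set Nm : Matrix (Fin (2*m+1+1)) (Fin (2*m+1+1)) ℝ :=
    Matrix.of (fun i j => b (((j:ℕ):ℤ) - ((i:ℕ):ℤ) + 1)) with hNdef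
  set w : Fin (2*m+1+1) → ℝ := fun i => b ((2*m+2 : ℤ) - ((i:ℕ):ℤ)) with hwdef
  set U : Matrix (Fin (2*m+1+1)) (Fin (2*m+1+1)) ℝ := M.updateCol 0 w with hUdef
  -- N as column-rotated U
  have h1 : Nm = U.submatrix id (finRotate (2*m+1+1)) := by
    funext i j
    simp only [Matrix.submatrix_apply, id_eq, finRotate_succ_apply]
    rcases eq_or_ne j (Fin.last (2*m+1)) with rfl | hj
    · rw [Fin.last_add_one]
      simp only [hUdef, Matrix.updateCol_apply, if_pos rfl, hwdef, hNdef, Matrix.of_apply,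
        Fin.val_last]
      congr 1
      push_cast
      ring
    · have hval : ((j + 1 : Fin (2*m+1+1)) : ℕ) = (j:ℕ) + 1 := by
        rw [Fin.val_add_one]
        simp [hj]
      have hne0 : (j + 1 : Fin (2*m+1+1)) ≠ 0 := by
        intro h
        rw [h] at hval
        simp at hval
      simp only [hUdef, Matrix.updateCol_apply, if_neg hne0, hMdef, hNdef, Matrix.of_apply,
        hval]
      congr 1
      push_cast
      ring
  have h2 : Nm.det = - U.det := by
    rw [h1, Matrix.det_permute', sign_finRotate]
    have : ((-1:ℤˣ)^(2*m+1) : ℤˣ) = -1 := Odd.neg_one_pow ⟨m, by ring⟩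
    rw [Nat.add_sub_cancel, this]; push_cast; ring
  -- the combined matrix W
  set W : Matrix (Fin (2*m+1+1)) (Fin (2*m+1+1)) ℝ :=
    M.updateCol 0 ((fun i : Fin (2*m+1+1) => b (0 - ((i:ℕ):ℤ))) + w) with hWdef
  have h3 : W.det = M.det + U.det := by
    rw [hWdef, Matrix.det_updateCol_add]
    have hM0 : (fun i : Fin (2*m+1+1) => b (0 - ((i:ℕ):ℤ))) = fun i => M i 0 := by
      funext i; simp [hMdef]
    rw [hM0, Matrix.updateCol_eq_self]
  -- entries of W
  have hW0 : ∀ jj : Fin (2*m+1+1), W jj 0 =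
      b (0 - ((jj:ℕ):ℤ)) + b ((2*m+2 : ℤ) - ((jj:ℕ):ℤ)) := by
    intro jj
    simp [hWdef, Matrix.updateCol_apply, hwdef]
  have hWs : ∀ (jj l : Fin (2*m+1+1)), l ≠ 0 → W jj l = b (((l:ℕ):ℤ) - ((jj:ℕ):ℤ)) := by
    intro jj l hl
    simp [hWdef, Matrix.updateCol_apply, hl, hMdef]
  -- neg coercion
  have hnegco : ∀ j : Fin (2*m+1+1), j ≠ 0 → ((-j : Fin (2*m+1+1)) : ℕ) = 2*m+2 - (j:ℕ) := by
    intro j hj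
    rw [Fin.coe_neg]
    have h1 : (j:ℕ) ≠ 0 := by intro h; apply hj; ext; simp [h]
    have := j.isLt
    rw [Nat.mod_eq_of_lt (by omega)]
  have hnegz : ∀ j : Fin (2*m+1+1), j ≠ 0 →
      (((-j : Fin (2*m+1+1)) : ℕ) : ℤ) = 2*m+2 - ((j:ℕ):ℤ) := by
    intro j hj
    rw [hnegco j hj]
    have := j.isLt
    push_cast [Nat.cast_sub (by omega : (j:ℕ) ≤ 2*m+2)]
    ring
  have hrefl : ∀ f : Fin (2*m+1+1) → ℝ, ∑ j, f (-j) = ∑ j, f j :=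
    fun f => Fintype.sum_equiv (Equiv.neg _) _ _ (fun _ => rfl)
  -- the indicator family
  set e : Fin (m+1) → Fin (2*m+1+1) → ℝ :=
    fun i jj => if (jj:ℕ) = (i:ℕ)+1 ∨ (jj:ℕ) + (i:ℕ) + 1 = 2*m+2 then 1 else 0 with hedef
  set A : Matrix (Fin (m+1)) (Fin m) ℝ :=
    Matrix.of (fun i j => ∑ jj, e i jj * W jj ⟨(j:ℕ)+1, by have := j.isLt; omega⟩) with hAdef
  obtain ⟨c, hc0, hcA⟩ : ∃ c : Fin (m+1) → ℝ, c ≠ 0 ∧ c ᵥ* A = 0 := by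
    have hni : ¬ Function.Injective A.vecMulLinear := by
      intro hinj
      have := LinearMap.finrank_le_finrank_of_injective hinj
      simp [Module.finrank_pi] at this
    rw [Function.not_injective_iff] at hni
    obtain ⟨x, y, hxy, hne⟩ := hni
    refine ⟨x - y, sub_ne_zero.mpr hne, ?_⟩
    have : A.vecMulLinear (x - y) = 0 := by rw [map_sub, hxy, sub_self]
    simpa [Matrix.vecMulLinear_apply, Matrix.sub_vecMul] using this
  set u : Fin (2*m+1+1) → ℝ := fun jj => ∑ i, c i * e i jj with hudef
  -- u vanishes at 0
  have hu0 : u 0 = 0 := by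
    rw [hudef]
    apply Finset.sum_eq_zero
    intro i _
    have hlt := i.isLt
    simp only [hedef, Fin.val_zero]
    simp only [show ¬ (0 = (i:ℕ)+1 ∨ 0 + (i:ℕ) + 1 = 2*m+2) by omega, ↓reduceIte]
    rw [mul_zero]
  -- u is palindromic
  have hupal : ∀ j : Fin (2*m+1+1), u (-j) = u j := by
    intro j
    rcases eq_or_ne j 0 with rfl | hj
    · rw [neg_zero]
    · apply Finset.sum_congr rfl
      intro i _
      have h1 := hnegco j hj
      have hj1 : (j:ℕ) ≠ 0 := by intro h; apply hj; ext; simp [h]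
      have hiff : (((-j : Fin (2*m+1+1)):ℕ) = (i:ℕ)+1 ∨
          ((-j : Fin (2*m+1+1)):ℕ) + (i:ℕ) + 1 = 2*m+2) ↔
          ((j:ℕ) = (i:ℕ)+1 ∨ (j:ℕ) + (i:ℕ) + 1 = 2*m+2) := by
        rw [h1]
        have := j.isLt
        have := i.isLt
        constructor <;> intro h <;> omega
      simp only [hedef]
      rw [if_congr hiff rfl rfl]
  -- u ≠ 0
  have hune : u ≠ 0 := by
    obtain ⟨i0, hi0⟩ := Function.ne_iff.mp hc0
    intro h
    have h2 : (∑ i, c i * e i (⟨(i0:ℕ)+1, by have := i0.isLt; omega⟩ : Fin (2*m+1+1))) = 0 := by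
      simpa [hudef] using congrFun h (⟨(i0:ℕ)+1, by have := i0.isLt; omega⟩ : Fin (2*m+1+1))
    rw [Finset.sum_eq_single i0] at h2
    · have he1 : e i0 ⟨(i0:ℕ)+1, by have := i0.isLt; omega⟩ = 1 := by
        simp [hedef]
      rw [he1, mul_one] at h2
      exact hi0 (by simpa using h2)
    · intro i _ hii
      have hii' : (i:ℕ) ≠ (i0:ℕ) := by simpa [Fin.ext_iff] using hii
      have hlt := i.isLt
      have hlt0 := i0.isLt
      simp only [hedef, Fin.val_mk]
      rw [if_neg (by omega), mul_zero]
    · intro h'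
      exact absurd (Finset.mem_univ i0) h'
  -- kernel property for columns 1..m
  have hker : ∀ l : Fin (2*m+1+1), 1 ≤ (l:ℕ) → (l:ℕ) ≤ m → ∑ jj, u jj * W jj l = 0 := by
    intro l h1 h2
    have hj : (l:ℕ) - 1 < m := by omega
    have hcol : (⟨((⟨(l:ℕ)-1, hj⟩ : Fin m):ℕ)+1, by simp; omega⟩ : Fin (2*m+1+1)) = l := by
      apply Fin.ext
      simp
      omega
    have hA := congrFun hcA ⟨(l:ℕ)-1, hj⟩
    have hswap : ∑ jj, u jj * W jj l = ∑ i, c i * A i ⟨(l:ℕ)-1, hj⟩ := by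
      calc ∑ jj, u jj * W jj l = ∑ jj, ∑ i, c i * (e i jj * W jj l) := by
            apply Finset.sum_congr rfl
            intro jj _
            rw [hudef, Finset.sum_mul]
            apply Finset.sum_congr rfl
            intro i _
            ring
        _ = ∑ i, ∑ jj, c i * (e i jj * W jj l) := Finset.sum_comm
        _ = ∑ i, c i * A i ⟨(l:ℕ)-1, hj⟩ := by
            apply Finset.sum_congr rfl
            intro i _
            rw [hAdef, Matrix.of_apply, Finset.mul_sum]
            apply Finset.sum_congr rfl
            intro jj _
            rw [hcol]
    rw [hswap]
    simpa [Matrix.vecMul, dotProduct] using hA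
  -- column 0 sum vanishes
  have hga : ∑ jj, u jj * W jj 0 = 0 := by
    have key : ∑ jj, u jj * W jj 0 = ∑ jj, -(u jj * W jj 0) := by
      calc ∑ jj, u jj * W jj 0 = ∑ jj, u (-jj) * W (-jj) 0 := (hrefl _).symm
        _ = ∑ jj, -(u jj * W jj 0) := by
            apply Finset.sum_congr rfl
            intro jj _
            rcases eq_or_ne jj 0 with rfl | hj
            · simp [hu0]
            · have hnj : (-jj : Fin (2*m+1+1)) ≠ 0 := by
                rw [neg_ne_zero]; exact hj
              rw [hupal, hW0, hW0]
              have t1 : b (0 - (((-jj : Fin (2*m+1+1)):ℕ):ℤ)) =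
                  - b ((2*m+2:ℤ) - ((jj:ℕ):ℤ)) := by
                rw [hnegz jj hj,
                  show (0:ℤ) - (2*m+2 - ((jj:ℕ):ℤ)) = -((2*m+2:ℤ) - ((jj:ℕ):ℤ)) by ring, hb]
              have t2 : b ((2*m+2:ℤ) - (((-jj : Fin (2*m+1+1)):ℕ):ℤ)) =
                  - b (0 - ((jj:ℕ):ℤ)) := by
                rw [hnegz jj hj,
                  show (2*m+2:ℤ) - (2*m+2 - ((jj:ℕ):ℤ)) = -((0:ℤ) - ((jj:ℕ):ℤ)) by ring, hb]
              rw [t1, t2]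
              ring
    have := key
    have h2 : (2:ℝ) * ∑ jj, u jj * W jj 0 = 0 := by
      rw [Finset.sum_neg_distrib] at this
      linarith
    linarith
  -- antisymmetry of column sums
  have hgb : ∀ l : Fin (2*m+1+1), l ≠ 0 →
      ∑ jj, u jj * W jj (-l) = - ∑ jj, u jj * W jj l := by
    intro l hl
    have hnl : (-l : Fin (2*m+1+1)) ≠ 0 := by rw [neg_ne_zero]; exact hl
    calc ∑ jj, u jj * W jj (-l) = ∑ jj, u (-jj) * W (-jj) (-l) := (hrefl _).symm
      _ = ∑ jj, -(u jj * W jj l) := by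
          apply Finset.sum_congr rfl
          intro jj _
          rcases eq_or_ne jj 0 with rfl | hj
          · simp [hu0]
          · rw [hupal, hWs _ _ hnl, hWs _ _ hl]
            have : b ((((-l : Fin (2*m+1+1)):ℕ):ℤ) - (((-jj : Fin (2*m+1+1)):ℕ):ℤ)) =
                - b (((l:ℕ):ℤ) - ((jj:ℕ):ℤ)) := by
              rw [hnegz l hl, hnegz jj hj,
                show (2*m+2 - ((l:ℕ):ℤ)) - (2*m+2 - ((jj:ℕ):ℤ)) =
                  -(((l:ℕ):ℤ) - ((jj:ℕ):ℤ)) by ring, hb]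
            rw [this]
            ring
      _ = - ∑ jj, u jj * W jj l := by rw [Finset.sum_neg_distrib]
  -- all column sums vanish
  have hg : ∀ l : Fin (2*m+1+1), ∑ jj, u jj * W jj l = 0 := by
    intro l
    rcases eq_or_ne l 0 with rfl | hl
    · exact hga
    · have hl1 : 1 ≤ (l:ℕ) := by
        have : (l:ℕ) ≠ 0 := by intro h; apply hl; ext; simp [h]
        omega
      by_cases hsm : (l:ℕ) ≤ m
      · exact hker l hl1 hsm
      · by_cases hmid : (l:ℕ) = m+1
        · have h := hgb l hl
          have hll : (-l : Fin (2*m+1+1)) = l := by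
            apply Fin.ext
            rw [hnegco l hl]
            omega
          rw [hll] at h
          linarith
        · have h := hgb l hl
          have hval : ((-l : Fin (2*m+1+1)):ℕ) = 2*m+2 - (l:ℕ) := hnegco l hl
          have := l.isLt
          have hk2 : ∑ jj, u jj * W jj (-l) = 0 := by
            apply hker
            · rw [hval]; omega
            · rw [hval]; omega
          rw [hk2] at h
          linarith
  have hdetW : W.det = 0 := by
    apply Matrix.exists_vecMul_eq_zero_iff.mp
    refine ⟨u, hune, ?_⟩
    funext l
    simpa [Matrix.vecMul, dotProduct] using hg l
  rw [h2]
  rw [hdetW] at h3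
  linarith

theorem stmt_7 (n : ℕ) (hn : Odd (n + 1)) (B : Matrix (Fin (n + 1)) (Fin (n + 1)) ℝ)
    (hskew : Bᵀ = -B)
    (hToeplitz : ∀ i j i' j' : Fin (n + 1),
      (i : ℕ) + (j' : ℕ) = (i' : ℕ) + (j : ℕ) → B i j = B i' j') :
    (B.submatrix Fin.castSucc Fin.castSucc).det = (B.submatrix Fin.castSucc Fin.succ).det := by
  classical
  obtain ⟨k, hk⟩ := hn
  rcases k with _ | m
  · have h0 : n = 0 := by omega
    subst h0
    simp [Matrix.det_isEmpty]
  · have h0 : n = 2*m+1+1 := by omega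
    subst h0
    set b : ℤ → ℝ := fun z =>
      if hz : z.natAbs < 2*m+1+1+1 then
        (if 0 ≤ z then B 0 ⟨z.natAbs, hz⟩ else - B 0 ⟨z.natAbs, hz⟩)
      else 0 with hbdef
    have h00 : B 0 0 = 0 := by
      have := congrFun (congrFun hskew 0) 0
      simp only [Matrix.transpose_apply, Matrix.neg_apply] at this
      linarith
    have hb : ∀ z, b (-z) = - b z := by
      intro z
      by_cases hz : z.natAbs < 2*m+1+1+1
      · have hz2 : (-z).natAbs < 2*m+1+1+1 := by rwa [Int.natAbs_neg]
        rcases lt_trichotomy z 0 with h | h | h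
        · rw [hbdef]
          simp only
          rw [dif_pos hz2, dif_pos hz, if_pos (by omega : (0:ℤ) ≤ -z),
            if_neg (by omega : ¬ (0:ℤ) ≤ z)]
          simp only [Int.natAbs_neg]
          ring
        · subst h
          have : b 0 = 0 := by
            rw [hbdef]
            simp only
            rw [dif_pos (by simp : (0:ℤ).natAbs < 2*m+1+1+1), if_pos le_rfl]
            simpa using h00
          rw [show (-(0:ℤ)) = 0 by ring, this]
          ring
        · rw [hbdef]
          simp only
          rw [dif_pos hz2, dif_pos hz, if_neg (by omega : ¬ (0:ℤ) ≤ -z),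
            if_pos (by omega : (0:ℤ) ≤ z)]
          simp only [Int.natAbs_neg]
      · have hz2 : ¬ (-z).natAbs < 2*m+1+1+1 := by rwa [Int.natAbs_neg]
        rw [hbdef]
        simp only
        rw [dif_neg hz2, dif_neg hz]
        ring
    have hBle : ∀ i j : Fin (2*m+1+1+1), (i:ℕ) ≤ (j:ℕ) →
        B i j = b (((j:ℕ):ℤ) - ((i:ℕ):ℤ)) := by
      intro i j hij
      have hjlt := j.isLt
      have hnat : (((j:ℕ):ℤ) - ((i:ℕ):ℤ)).natAbs = (j:ℕ) - (i:ℕ) := by omega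
      have hlt : (((j:ℕ):ℤ) - ((i:ℕ):ℤ)).natAbs < 2*m+1+1+1 := by omega
      have h0le : (0:ℤ) ≤ ((j:ℕ):ℤ) - ((i:ℕ):ℤ) := by omega
      rw [hbdef]
      simp only
      rw [dif_pos hlt, if_pos h0le]
      apply hToeplitz
      simp only [Fin.val_mk, Fin.val_zero]
      omega
    have hB : ∀ i j : Fin (2*m+1+1+1), B i j = b (((j:ℕ):ℤ) - ((i:ℕ):ℤ)) := by
      intro i j
      rcases le_or_gt (i:ℕ) (j:ℕ) with h | h
      · exact hBle i j h
      · have h1 : B i j = - B j i := by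
          have := congrFun (congrFun hskew j) i
          simp only [Matrix.transpose_apply, Matrix.neg_apply] at this
          linarith
        rw [h1, hBle j i (le_of_lt h),
          show ((j:ℕ):ℤ) - ((i:ℕ):ℤ) = -(((i:ℕ):ℤ) - ((j:ℕ):ℤ)) by ring, hb]
    have hMM : B.submatrix Fin.castSucc Fin.castSucc =
        Matrix.of (fun i j : Fin (2*m+1+1) => b (((j:ℕ):ℤ) - ((i:ℕ):ℤ))) := by
      funext i j
      simp only [Matrix.submatrix_apply, Matrix.of_apply]
      rw [hB]
      simp [Fin.coe_castSucc]
    have hNN : B.submatrix Fin.castSucc Fin.succ =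
        Matrix.of (fun i j : Fin (2*m+1+1) => b (((j:ℕ):ℤ) - ((i:ℕ):ℤ) + 1)) := by
      funext i j
      simp only [Matrix.submatrix_apply, Matrix.of_apply]
      rw [hB]
      congr 1
      simp only [Fin.val_succ, Fin.coe_castSucc]
      push_cast
      ring
    rw [hMM, hNN]
    exact aux_toeplitz_skew m b hb
end

section
/- Let B be an n×n real skew-symmetric Toeplitz matrix with n even, let m = n−1, and define K = B_m(1,1) and C = B_m(1,2). Then 1ᵀ·adj(K)·1 = 1ᵀ·adj(C)·1, where 1 is the all-ones vector in ℝ^m. -/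
open Matrix

section Chunk1

variable {R : Type*} [CommRing R]

lemma sum_adj {k : ℕ} (A : Matrix (Fin k) (Fin k) R) :
    dotProduct (fun _ => (1:R)) (A.adjugate.mulVec (fun _ => 1))
      = ∑ j, (A.updateCol j (fun _ => 1)).det := by
  have key : ∀ M : Matrix (Fin k) (Fin k) R,
      (∑ i, ∑ j, M.adjugate i j) = ∑ j, (M.updateRow j (fun _ => 1)).det := by
    intro M
    rw [Finset.sum_comm (f := fun i j => M.adjugate i j)]
    refine Finset.sum_congr rfl fun j _ => ?_
    simp_rw [adjugate_apply]
    have hs : (fun _ => (1:R)) = ∑ i : Fin k, Pi.single i (1:R) := by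
      rw [Finset.univ_sum_single (fun _ => (1:R))]
    calc ∑ i, (M.updateRow j (Pi.single i 1)).det
        = (M.updateRow j (∑ i : Fin k, Pi.single i (1:R))).det := by
          have := ((detRowAlternating : (Fin k → R) [⋀^Fin k]→ₗ[R] R).map_update_sum
            (Finset.univ) j (fun i => Pi.single i (1:R)) M)
          exact this.symm
      _ = _ := by rw [← hs]
  have h1 : dotProduct (fun _ => (1:R)) (A.adjugate.mulVec (fun _ => 1))
      = ∑ i, ∑ j, A.adjugate i j := by
    simp [dotProduct, Matrix.mulVec]
  have h2 : (∑ i, ∑ j, A.adjugate i j) = ∑ i, ∑ j, Aᵀ.adjugate i j := by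
    rw [← adjugate_transpose, Finset.sum_comm (f := fun i j => A.adjugate i j)]
    simp [Matrix.transpose_apply]
  rw [h1, h2, key Aᵀ]
  refine Finset.sum_congr rfl fun j _ => ?_
  rw [Matrix.updateRow_transpose, Matrix.det_transpose]

lemma det_updateCol_single {k : ℕ} (M : Matrix (Fin (k+1)) (Fin (k+1)) R) (r b : Fin (k+1)) :
    (M.updateCol b (Pi.single r 1)).det
      = (-1)^((r:ℕ)+(b:ℕ)) * (M.submatrix r.succAbove b.succAbove).det := by
  rw [det_succ_column _ b]
  rw [Finset.sum_eq_single r]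
  · rw [Matrix.updateCol_self]
    have hsub : (M.updateCol b (Pi.single r 1)).submatrix r.succAbove b.succAbove
        = M.submatrix r.succAbove b.succAbove := by
      ext i j
      simp [Matrix.submatrix_apply, Matrix.updateCol_apply, Fin.succAbove_ne b j]
    rw [hsub]
    simp
  · intro i _ hir
    rw [Matrix.updateCol_self]
    simp [Pi.single_apply, hir]
  · intro h; exact absurd (Finset.mem_univ r) h

end Chunk1

section Chunk2

variable {N : ℕ}

lemma one_updateCol_eq (a : Fin N) (u : Fin N → ℝ) :
    (1 : Matrix (Fin N) (Fin N) ℝ).updateCol a (Pi.single a 1 + u)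
      = 1 + vecMulVec u (Pi.single a 1) := by
  ext i j
  by_cases h : j = a
  · subst h
    simp [Matrix.updateCol_apply, Matrix.vecMulVec_apply, Matrix.one_apply, Pi.single_apply,
      add_comm]
  · simp [Matrix.updateCol_apply, h, Matrix.vecMulVec_apply, Pi.single_apply, Ne.symm h]

lemma det_one_add_vecMulVec (a : Fin N) (u : Fin N → ℝ) :
    (1 + vecMulVec u (Pi.single a 1)).det = 1 + u a := by
  rw [← one_updateCol_eq, ← Matrix.cramer_apply, Matrix.cramer_eq_adjugate_mulVec,
    Matrix.adjugate_one, Matrix.one_mulVec]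
  simp

lemma vecMulVec_mul_vecMulVec (u v w x : Fin N → ℝ) :
    vecMulVec u v * vecMulVec w x = (v ⬝ᵥ w) • vecMulVec u x := by
  ext i j
  simp only [Matrix.mul_apply, Matrix.vecMulVec_apply, Matrix.smul_apply, smul_eq_mul,
    dotProduct, Finset.sum_mul]
  exact Finset.sum_congr rfl fun k _ => by ring

lemma adj_one_add_aux (a : Fin N) (u : Fin N → ℝ) (h : 1 + u a ≠ 0) :
    (1 + vecMulVec u (Pi.single a 1)).adjugate
      = (1 + u a) • (1 : Matrix (Fin N) (Fin N) ℝ) - vecMulVec u (Pi.single a 1) := by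
  set c := 1 + u a with hc
  set V := vecMulVec u (Pi.single a 1) with hV
  have hVV : V * V = u a • V := by
    rw [hV, vecMulVec_mul_vecMulVec]
    congr 1
    simp [dotProduct, Pi.single_apply]
  have hinv : (1 + V) * (1 - c⁻¹ • V) = 1 := by
    rw [mul_sub, mul_one, Matrix.mul_smul, add_mul, one_mul, hVV, smul_add, smul_smul]
    have : c⁻¹ • V + (c⁻¹ * u a) • V = V := by
      rw [← add_smul]
      have : c⁻¹ + c⁻¹ * u a = 1 := by
        field_simp [hc]
        exact hc.symm
      rw [this, one_smul]
    calc 1 + V - (c⁻¹ • V + (c⁻¹ * u a) • V) = 1 + V - V := by rw [this]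
    _ = 1 := by abel
  have hXinv : (1 + V)⁻¹ = 1 - c⁻¹ • V := Matrix.inv_eq_right_inv hinv
  have hdet : (1 + V).det = c := det_one_add_vecMulVec a u
  have := Matrix.inv_def (1 + V)
  rw [hXinv, hdet, Ring.inverse_eq_inv] at this
  have h2 := congrArg (fun M => c • M) this
  simp only [smul_smul, mul_inv_cancel₀ h, one_smul] at h2
  rw [← h2, smul_sub, smul_smul, mul_inv_cancel₀ h, one_smul]

lemma adj_one_add (a : Fin N) (u : Fin N → ℝ) :
    (1 + vecMulVec u (Pi.single a 1)).adjugate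
      = (1 + u a) • (1 : Matrix (Fin N) (Fin N) ℝ) - vecMulVec u (Pi.single a 1) := by
  by_cases h : 1 + u a ≠ 0
  · exact adj_one_add_aux a u h
  push_neg at h
  -- continuity argument along the line u + s • e_a
  set φ : ℝ → Matrix (Fin N) (Fin N) ℝ := fun s =>
    (1 + vecMulVec (u + s • (Pi.single a 1 : Fin N → ℝ)) (Pi.single a 1)).adjugate with hφ
  set ψ : ℝ → Matrix (Fin N) (Fin N) ℝ := fun s =>
    (1 + (u + s • (Pi.single a 1 : Fin N → ℝ)) a) • (1 : Matrix (Fin N) (Fin N) ℝ)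
      - vecMulVec (u + s • (Pi.single a 1 : Fin N → ℝ)) (Pi.single a 1) with hψ
  have hcont_inner : Continuous fun s : ℝ => (u + s • (Pi.single a 1 : Fin N → ℝ)) := by
    continuity
  have hφc : Continuous φ := by
    apply Continuous.matrix_adjugate
    apply Continuous.add continuous_const
    apply continuous_matrix
    intro i j
    simp only [Matrix.vecMulVec_apply]
    exact (((continuous_apply i).comp hcont_inner).mul continuous_const)
  have hψc : Continuous ψ := by
    apply Continuous.sub
    · apply Continuous.fun_smul
      · exact (continuous_const.add ((continuous_apply a).comp hcont_inner))
      · exact continuous_const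
    · apply continuous_matrix
      intro i j
      simp only [Matrix.vecMulVec_apply]
      exact (((continuous_apply i).comp hcont_inner).mul continuous_const)
  have heq : φ = ψ := by
    apply Continuous.ext_on (dense_compl_singleton (0:ℝ)) hφc hψc
    intro s hs
    have hs0 : s ≠ 0 := hs
    have hval : (u + s • (Pi.single a 1 : Fin N → ℝ)) a = u a + s := by simp
    have hne : 1 + (u + s • (Pi.single a 1 : Fin N → ℝ)) a ≠ 0 := by
      rw [hval]; intro hcon; exact hs0 (by linarith)
    simpa [hψ] using adj_one_add_aux a (u + s • (Pi.single a 1 : Fin N → ℝ)) hne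
  have := congrFun heq 0
  simpa [hφ, hψ] using this

end Chunk2

section Chunk3

variable {N : ℕ}

lemma mul_vecMulVec (B : Matrix (Fin N) (Fin N) ℝ) (u v : Fin N → ℝ) :
    B * vecMulVec u v = vecMulVec (B.mulVec u) v := by
  ext i j
  simp only [Matrix.mul_apply, Matrix.vecMulVec_apply, Matrix.mulVec, dotProduct,
    Finset.sum_mul]
  exact Finset.sum_congr rfl fun k _ => by ring

lemma updateCol_two (M : Matrix (Fin N) (Fin N) ℝ) (a b : Fin N) (hab : a ≠ b)
    (x y : Fin N → ℝ) :
    (M.updateCol a x).updateCol b y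
      = M + vecMulVec (x - fun i => M i a) (Pi.single a 1)
          + vecMulVec (y - fun i => M i b) (Pi.single b 1) := by
  ext i j
  by_cases hjb : j = b
  · subst hjb
    simp [Matrix.updateCol_apply, Matrix.vecMulVec_apply, Pi.single_apply, Ne.symm hab]
  · by_cases hja : j = a
    · subst hja
      simp [Matrix.updateCol_apply, hjb, Matrix.vecMulVec_apply, Pi.single_apply, hab,
        Ne.symm hjb]
    · simp [Matrix.updateCol_apply, hjb, hja, Matrix.vecMulVec_apply, Pi.single_apply,
        Ne.symm hjb, Ne.symm hja]


lemma one_two_col_eq (a : Fin N) (x : Fin N → ℝ) :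
    (1 : Matrix (Fin N) (Fin N) ℝ).updateCol a x
      = 1 + vecMulVec (x - Pi.single a 1) (Pi.single a 1) := by
  ext i j
  by_cases hj : j = a
  · subst hj
    simp [Matrix.updateCol_apply, Matrix.vecMulVec_apply, Matrix.one_apply, Pi.single_apply]
  · simp [Matrix.updateCol_apply, hj, Matrix.vecMulVec_apply, Pi.single_apply, Ne.symm hj]

lemma det_one_two_col (a b : Fin N) (hab : a ≠ b) (x y : Fin N → ℝ) :
    (((1 : Matrix (Fin N) (Fin N) ℝ).updateCol a x).updateCol b y).det
      = x a * y b - x b * y a := by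
  rw [← Matrix.cramer_apply, Matrix.cramer_eq_adjugate_mulVec]
  rw [one_two_col_eq, adj_one_add]
  have hxa : (x - Pi.single a 1 : Fin N → ℝ) a = x a - 1 := by simp
  rw [hxa]
  simp only [Matrix.sub_mulVec, Matrix.smul_mulVec, Matrix.one_mulVec]
  have hvm : (vecMulVec (x - Pi.single a 1) (Pi.single a 1)).mulVec y
      = y a • (x - Pi.single a 1) := by
    ext i
    simp only [Matrix.mulVec, Matrix.vecMulVec_apply, dotProduct, Pi.smul_apply,
      smul_eq_mul]
    rw [Finset.sum_eq_single a]
    · simp; ring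
    · intro k _ hk; simp [Pi.single_apply, hk]
    · intro hmem; exact absurd (Finset.mem_univ a) hmem
  rw [hvm]
  simp only [Pi.sub_apply, Pi.smul_apply, smul_eq_mul, Pi.single_apply]
  simp [hab, Ne.symm hab]
  ring

lemma det_two_col (B : Matrix (Fin N) (Fin N) ℝ) (hB : IsUnit B.det) (a b : Fin N) (hab : a ≠ b)
    (x y : Fin N → ℝ) :
    ((B.updateCol a x).updateCol b y).det
      = B.det * ((B⁻¹.mulVec x) a * (B⁻¹.mulVec y) b - (B⁻¹.mulVec x) b * (B⁻¹.mulVec y) a) := by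
  have hcol1 : (fun i => (1 : Matrix (Fin N) (Fin N) ℝ) i a) = Pi.single a 1 := by
    ext i
    simp [Matrix.one_apply, Pi.single_apply, eq_comm]
  have hcol1b : (fun i => (1 : Matrix (Fin N) (Fin N) ℝ) i b) = Pi.single b 1 := by
    ext i
    simp [Matrix.one_apply, Pi.single_apply, eq_comm]
  have hfact : (B.updateCol a x).updateCol b y
      = B * (((1 : Matrix (Fin N) (Fin N) ℝ).updateCol a (B⁻¹.mulVec x)).updateCol b
          (B⁻¹.mulVec y)) := by
    rw [updateCol_two _ a b hab, updateCol_two _ a b hab, hcol1, hcol1b]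
    rw [mul_add, mul_add, mul_one, mul_vecMulVec, mul_vecMulVec]
    rw [Matrix.mulVec_sub, Matrix.mulVec_sub, Matrix.mulVec_mulVec, Matrix.mul_nonsing_inv B hB,
      Matrix.mulVec_mulVec, Matrix.mul_nonsing_inv B hB, Matrix.one_mulVec, Matrix.one_mulVec,
      Matrix.mulVec_single]
    congr 2 <;> · ext i; simp [Matrix.vecMulVec_apply]
  rw [hfact, Matrix.det_mul, det_one_two_col a b hab]

end Chunk3

section Chunk4

variable {n : ℕ}

-- persymmetry from the Toeplitz condition
lemma persym (B : Matrix (Fin (n+1)) (Fin (n+1)) ℝ)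
    (hToeplitz : ∀ i j i' j' : Fin (n + 1),
      (i : ℕ) + (j' : ℕ) = (i' : ℕ) + (j : ℕ) → B i j = B i' j') :
    B.submatrix Fin.rev Fin.rev = Bᵀ := by
  ext i j
  refine hToeplitz i.rev j.rev j i ?_
  have hi := i.isLt
  have hj := j.isLt
  simp only [Fin.val_rev]
  omega

lemma inv_skew (B : Matrix (Fin (n+1)) (Fin (n+1)) ℝ) (hskew : Bᵀ = -B) (hB : IsUnit B.det) :
    (B⁻¹)ᵀ = -B⁻¹ := by
  rw [Matrix.transpose_nonsing_inv, hskew]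
  have : (-B) * (-(B⁻¹)) = 1 := by
    rw [neg_mul_neg, Matrix.mul_nonsing_inv B hB]
  exact Matrix.inv_eq_right_inv this

lemma inv_rev (B : Matrix (Fin (n+1)) (Fin (n+1)) ℝ) (hskew : Bᵀ = -B)
    (hToeplitz : ∀ i j i' j' : Fin (n + 1),
      (i : ℕ) + (j' : ℕ) = (i' : ℕ) + (j : ℕ) → B i j = B i' j')
    (hB : IsUnit B.det) :
    B⁻¹.submatrix Fin.rev Fin.rev = -B⁻¹ := by
  have h1 : B⁻¹.submatrix (Fin.revPerm : Equiv.Perm (Fin (n+1)))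
      (Fin.revPerm : Equiv.Perm (Fin (n+1))) * (B.submatrix Fin.revPerm Fin.revPerm) = 1 := by
    rw [Matrix.submatrix_mul_equiv, Matrix.nonsing_inv_mul B hB, Matrix.submatrix_one_equiv]
  have h2 : (B.submatrix (Fin.revPerm : Equiv.Perm (Fin (n+1))) Fin.revPerm) = Bᵀ := by
    exact persym B hToeplitz
  rw [h2] at h1
  have h3 : (Bᵀ)⁻¹ = B⁻¹.submatrix (Fin.revPerm : Equiv.Perm (Fin (n+1))) Fin.revPerm :=
    Matrix.inv_eq_left_inv h1
  have h4 : (Bᵀ)⁻¹ = -B⁻¹ := by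
    rw [← Matrix.transpose_nonsing_inv, inv_skew B hskew hB]
  rw [← h3.symm.trans h4]
  rfl

end Chunk4

section Chunk5

theorem stmt_inv (n : ℕ) (hn : Even (n + 1)) (B : Matrix (Fin (n + 1)) (Fin (n + 1)) ℝ)
    (hskew : Bᵀ = -B)
    (hToeplitz : ∀ i j i' j' : Fin (n + 1),
      (i : ℕ) + (j' : ℕ) = (i' : ℕ) + (j : ℕ) → B i j = B i' j')
    (hB : IsUnit B.det) :
    dotProduct (fun _ => (1 : ℝ))
        ((B.submatrix Fin.castSucc Fin.castSucc).adjugate.mulVec (fun _ => (1 : ℝ))) =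
      dotProduct (fun _ => (1 : ℝ))
        ((B.submatrix Fin.castSucc Fin.succ).adjugate.mulVec (fun _ => (1 : ℝ))) := by
  have hodd : Odd n := by
    rcases hn with ⟨k, hk⟩
    exact ⟨k - 1, by omega⟩
  set l : Fin (n+1) := Fin.last n with hl
  set G : Matrix (Fin (n+1)) (Fin (n+1)) ℝ := B⁻¹ with hG
  set gv : Fin (n+1) → ℝ := G.mulVec (fun _ => 1) with hgv
  set hv : Fin (n+1) → ℝ := fun i => G i l with hhv
  -- basic facts about G
  have hGskew : Gᵀ = -G := inv_skew B hskew hB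
  have hGapp : ∀ i j, G j i = -G i j := by
    intro i j
    have := congrFun (congrFun hGskew i) j
    simpa [Matrix.transpose_apply] using this
  have hgrev : ∀ i, gv (Fin.rev i) = -gv i := by
    intro i
    have hGrev := inv_rev B hskew hToeplitz hB
    have hGrevapp : ∀ a b, G (Fin.rev a) (Fin.rev b) = -G a b := by
      intro a b
      have := congrFun (congrFun hGrev a) b
      simpa [Matrix.submatrix_apply] using this
    calc gv (Fin.rev i) = ∑ j, G (Fin.rev i) j := by
          simp [hgv, Matrix.mulVec, dotProduct]
      _ = ∑ j, G (Fin.rev i) (Fin.rev j) := (Function.Bijective.sum_comp Fin.rev_bijective _).symm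
      _ = ∑ j, -G i j := by simp [hGrevapp]
      _ = -gv i := by simp [hgv, Matrix.mulVec, dotProduct]
  have hg0 : gv 0 = -gv l := by
    have := hgrev l
    rwa [Fin.rev_last] at this
  have hsumg : (∑ i, gv i) = 0 := by
    have h1 : (∑ i, gv i) = ∑ i, ∑ j, G i j := by
      simp [hgv, Matrix.mulVec, dotProduct]
    have h2 : (∑ i, ∑ j, G i j) = ∑ i, ∑ j, G j i := Finset.sum_comm
    have h3 : (∑ i, ∑ j, (G j i : ℝ)) = -∑ i, ∑ j, G i j := by
      calc (∑ i, ∑ j, (G j i : ℝ)) = ∑ i, ∑ j, -G i j :=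
            Finset.sum_congr rfl fun i _ => Finset.sum_congr rfl fun j _ => hGapp i j
        _ = -∑ i, ∑ j, G i j := by
            simp [Finset.sum_neg_distrib]
    rw [h1]
    have := h2.trans h3
    rw [← h1] at this ⊢
    linarith [this]
  have hsumh : (∑ i, hv i) = -gv l := by
    have h1 : (∑ i, hv i) = ∑ i, -G l i := by
      simp only [hhv]
      exact Finset.sum_congr rfl fun i _ => by rw [hGapp]
    rw [h1]
    have : gv l = ∑ i, G l i := by simp [hgv, Matrix.mulVec, dotProduct]
    rw [this]
    simp
  have hvl : hv l = 0 := by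
    have := hGapp l l
    simp only [hhv]
    linarith
  -- rewrite both sides as sums of determinants
  rw [sum_adj, sum_adj]
  -- identify gv and hv with B⁻¹ *ᵥ ...
  have hones : B⁻¹.mulVec (fun _ => (1:ℝ)) = gv := rfl
  have hsingle : B⁻¹.mulVec (Pi.single l 1) = hv := by
    rw [Matrix.mulVec_single]
    ext i
    simp [hhv, hG]
  -- left-hand terms
  have hK : ∀ j : Fin n,
      ((B.submatrix Fin.castSucc Fin.castSucc).updateCol j (fun _ => (1:ℝ))).det
        = B.det * (gv (Fin.castSucc j) * hv l - gv l * hv (Fin.castSucc j)) := by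
    intro j
    have hsub : ((B.updateCol (Fin.castSucc j) (fun _ => (1:ℝ))).submatrix
        Fin.castSucc Fin.castSucc)
        = (B.submatrix Fin.castSucc Fin.castSucc).updateCol j (fun _ => (1:ℝ)) := by
      ext i k
      by_cases hk : k = j
      · subst hk; simp [Matrix.updateCol_apply]
      · simp [Matrix.updateCol_apply, hk, fun h => hk (Fin.castSucc_injective n h)]
    have hlift := det_updateCol_single (B.updateCol (Fin.castSucc j) (fun _ => (1:ℝ))) l l
    rw [Fin.succAbove_last] at hlift
    have hsign : ((-1:ℝ))^((l:ℕ)+(l:ℕ)) = 1 := Even.neg_one_pow ⟨(l:ℕ), rfl⟩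
    rw [hsign, one_mul] at hlift
    have hne : Fin.castSucc j ≠ l := (Fin.castSucc_lt_last j).ne
    rw [← hsub, ← hlift, det_two_col B hB (Fin.castSucc j) l hne (fun _ => (1:ℝ))
      (Pi.single l 1), hones, hsingle]
  -- right-hand terms
  have hC : ∀ j : Fin n,
      ((B.submatrix Fin.castSucc Fin.succ).updateCol j (fun _ => (1:ℝ))).det
        = -(B.det * (gv (Fin.succ j) * hv 0 - gv 0 * hv (Fin.succ j))) := by
    intro j
    have hsub : ((B.updateCol (Fin.succ j) (fun _ => (1:ℝ))).submatrix
        Fin.castSucc Fin.succ)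
        = (B.submatrix Fin.castSucc Fin.succ).updateCol j (fun _ => (1:ℝ)) := by
      ext i k
      by_cases hk : k = j
      · subst hk; simp [Matrix.updateCol_apply]
      · simp [Matrix.updateCol_apply, hk, fun h => hk (Fin.succ_injective n h)]
    have hlift := det_updateCol_single (B.updateCol (Fin.succ j) (fun _ => (1:ℝ))) l 0
    rw [Fin.succAbove_last, Fin.succAbove_zero] at hlift
    have hsign : ((-1:ℝ))^((l:ℕ)+((0 : Fin (n+1)):ℕ)) = -1 := by
      simp only [Fin.val_zero, add_zero, hl, Fin.val_last]
      exact Odd.neg_one_pow hodd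
    rw [hsign] at hlift
    have hne : Fin.succ j ≠ (0 : Fin (n+1)) := Fin.succ_ne_zero j
    have hflip : ((B.updateCol (Fin.succ j) fun _ => (1:ℝ)).submatrix Fin.castSucc
        Fin.succ).det
        = -(((B.updateCol (Fin.succ j) (fun _ => (1:ℝ))).updateCol 0
            (Pi.single l 1)).det) := by
      rw [hlift]; ring
    rw [← hsub, hflip, det_two_col B hB (Fin.succ j) 0 hne (fun _ => (1:ℝ))
      (Pi.single l 1), hones, hsingle]
  simp only [hK, hC]
  -- sum computations
  have hs1 : (∑ j : Fin n, gv (Fin.castSucc j)) = -gv l := by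
    have := Fin.sum_univ_castSucc (f := gv)
    rw [hsumg] at this
    rw [hl]
    linarith
  have hs2 : (∑ j : Fin n, hv (Fin.castSucc j)) = -gv l - hv l := by
    have := Fin.sum_univ_castSucc (f := hv)
    rw [hsumh] at this
    rw [hl]
    linarith
  have hs3 : (∑ j : Fin n, gv (Fin.succ j)) = gv l := by
    have := Fin.sum_univ_succ (f := gv)
    rw [hsumg] at this
    rw [hg0] at this
    linarith
  have hs4 : (∑ j : Fin n, hv (Fin.succ j)) = -gv l - hv 0 := by
    have := Fin.sum_univ_succ (f := hv)
    rw [hsumh] at this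
    linarith
  have expand1 : (∑ j : Fin n, B.det * (gv (Fin.castSucc j) * hv l - gv l * hv (Fin.castSucc j)))
      = B.det * ((∑ j : Fin n, gv (Fin.castSucc j)) * hv l
          - gv l * (∑ j : Fin n, hv (Fin.castSucc j))) := by
    rw [← Finset.mul_sum, Finset.sum_sub_distrib, ← Finset.sum_mul, ← Finset.mul_sum]
  have expand2 : (∑ j : Fin n, -(B.det * (gv (Fin.succ j) * hv 0 - gv 0 * hv (Fin.succ j))))
      = -(B.det * ((∑ j : Fin n, gv (Fin.succ j)) * hv 0
          - gv 0 * (∑ j : Fin n, hv (Fin.succ j)))) := by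
    rw [Finset.sum_neg_distrib, ← Finset.mul_sum, Finset.sum_sub_distrib, ← Finset.sum_mul,
      ← Finset.mul_sum]
  rw [expand1, expand2, hs1, hs2, hs3, hs4, hg0, hvl]
  ring

end Chunk5

section Chunk6

variable {n : ℕ}

-- evaluation of the characteristic polynomial
lemma charpoly_eval (M : Matrix (Fin (n+1)) (Fin (n+1)) ℝ) (t : ℝ) :
    M.charpoly.eval t = (t • (1 : Matrix (Fin (n+1)) (Fin (n+1)) ℝ) - M).det := by
  have h1 : M.charpoly.eval t = Polynomial.evalRingHom t M.charpoly := rfl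
  rw [h1, Matrix.charpoly, RingHom.map_det]
  congr 1
  ext i j
  by_cases hij : i = j
  · subst hij
    simp [Matrix.charmatrix_apply_eq, Matrix.one_apply]
  · simp [Matrix.charmatrix_apply, Matrix.diagonal_apply_ne _ hij, Matrix.one_apply, hij]

lemma dense_unit_det (B T : Matrix (Fin (n+1)) (Fin (n+1)) ℝ) (hT : IsUnit T.det) :
    Dense {t : ℝ | IsUnit (B + t • T).det} := by
  set M : Matrix (Fin (n+1)) (Fin (n+1)) ℝ := -(T⁻¹ * B) with hM
  have hq : M.charpoly ≠ 0 := (Matrix.charpoly_monic M).ne_zero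
  have key : ∀ t : ℝ, ¬ M.charpoly.IsRoot t → IsUnit (B + t • T).det := by
    intro t ht
    have hfact : B + t • T = T * (T⁻¹ * B + t • 1) := by
      rw [mul_add, ← mul_assoc, Matrix.mul_nonsing_inv T hT, one_mul, mul_smul_comm, mul_one]
    have heval : (T⁻¹ * B + t • 1).det = M.charpoly.eval t := by
      rw [charpoly_eval, hM, sub_neg_eq_add]
      rw [add_comm (t • (1 : Matrix (Fin (n+1)) (Fin (n+1)) ℝ)) (T⁻¹ * B)]
    rw [hfact, Matrix.det_mul]
    refine hT.mul ?_
    rw [heval]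
    exact isUnit_iff_ne_zero.mpr ht
  have hsub : {t : ℝ | M.charpoly.IsRoot t}ᶜ ⊆ {t : ℝ | IsUnit (B + t • T).det} :=
    fun t ht => key t ht
  have hdense : Dense {t : ℝ | M.charpoly.IsRoot t}ᶜ :=
    Set.Countable.dense_compl ℝ (Polynomial.finite_setOf_isRoot hq).countable
  exact hdense.mono hsub

end Chunk6

section Chunk7

variable {n : ℕ}

def Tmat (n m : ℕ) : Matrix (Fin (n+1)) (Fin (n+1)) ℝ :=
  Matrix.of fun i j => if (j:ℕ) = (i:ℕ) + m then (1:ℝ) else if (i:ℕ) = (j:ℕ) + m then -1 else 0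

lemma Tmat_skew (m : ℕ) (hm : n + 1 = m + m) : (Tmat n m)ᵀ = -(Tmat n m) := by
  ext i j
  have hi := i.isLt
  have hj := j.isLt
  simp only [Matrix.transpose_apply, Matrix.neg_apply, Tmat, Matrix.of_apply]
  split_ifs <;> first | (exfalso; omega) | norm_num

lemma Tmat_toeplitz (m : ℕ) : ∀ i j i' j' : Fin (n + 1),
    (i : ℕ) + (j' : ℕ) = (i' : ℕ) + (j : ℕ) → Tmat n m i j = Tmat n m i' j' := by
  intro i j i' j' h
  simp only [Tmat, Matrix.of_apply]
  split_ifs <;> first | rfl | (exfalso; omega)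

lemma Tmat_sq (m : ℕ) (hm : n + 1 = m + m) : Tmat n m * Tmat n m = -1 := by
  have hm1 : 1 ≤ m := by omega
  ext i k
  rw [Matrix.mul_apply, Matrix.neg_apply, Matrix.one_apply]
  have hi := i.isLt
  have hk := k.isLt
  by_cases hcase : (i:ℕ) < m
  · rw [Finset.sum_eq_single (⟨(i:ℕ)+m, by omega⟩ : Fin (n+1))]
    · simp only [Tmat, Matrix.of_apply, Fin.ext_iff]
      split_ifs <;> first | (exfalso; omega) | norm_num
    · intro j _ hj
      have hjv : (j:ℕ) ≠ (i:ℕ) + m := fun h => hj (Fin.ext h)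
      have : Tmat n m i j = 0 := by
        simp only [Tmat, Matrix.of_apply]
        split_ifs <;> first | rfl | (exfalso; omega)
      rw [this, zero_mul]
    · intro h; exact absurd (Finset.mem_univ _) h
  · rw [Finset.sum_eq_single (⟨(i:ℕ)-m, by omega⟩ : Fin (n+1))]
    · simp only [Tmat, Matrix.of_apply, Fin.ext_iff]
      split_ifs <;> first | (exfalso; omega) | norm_num
    · intro j _ hj
      have hjv : (j:ℕ) ≠ (i:ℕ) - m := fun h => hj (Fin.ext h)
      have : Tmat n m i j = 0 := by
        simp only [Tmat, Matrix.of_apply]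
        split_ifs <;> first | rfl | (exfalso; omega)
      rw [this, zero_mul]
    · intro h; exact absurd (Finset.mem_univ _) h

lemma Tmat_det_isUnit (hn : Even (n+1)) (m : ℕ) (hm : n + 1 = m + m) :
    IsUnit (Tmat n m).det := by
  have h := congrArg Matrix.det (Tmat_sq m hm)
  rw [Matrix.det_mul, Matrix.det_neg, Matrix.det_one, mul_one, Fintype.card_fin,
    Even.neg_one_pow hn] at h
  rw [isUnit_iff_ne_zero]
  intro h0
  rw [h0, mul_zero] at h
  exact zero_ne_one h

end Chunk7

theorem stmt_8 (n : ℕ) (hn : Even (n + 1)) (B : Matrix (Fin (n + 1)) (Fin (n + 1)) ℝ)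
    (hskew : Bᵀ = -B)
    (hToeplitz : ∀ i j i' j' : Fin (n + 1),
      (i : ℕ) + (j' : ℕ) = (i' : ℕ) + (j : ℕ) → B i j = B i' j') :
    dotProduct (fun _ => (1 : ℝ))
        ((B.submatrix Fin.castSucc Fin.castSucc).adjugate.mulVec (fun _ => (1 : ℝ))) =
      dotProduct (fun _ => (1 : ℝ))
        ((B.submatrix Fin.castSucc Fin.succ).adjugate.mulVec (fun _ => (1 : ℝ))) := by
  obtain ⟨m, hm⟩ := hn
  set T : Matrix (Fin (n+1)) (Fin (n+1)) ℝ := Tmat n m with hT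
  have hTdet : IsUnit T.det := Tmat_det_isUnit ⟨m, hm⟩ m hm
  set F : ℝ → ℝ := fun t => dotProduct (fun _ => (1 : ℝ))
      (((B + t • T).submatrix Fin.castSucc Fin.castSucc).adjugate.mulVec (fun _ => (1 : ℝ)))
    with hF
  set F' : ℝ → ℝ := fun t => dotProduct (fun _ => (1 : ℝ))
      (((B + t • T).submatrix Fin.castSucc Fin.succ).adjugate.mulVec (fun _ => (1 : ℝ)))
    with hF'
  have hsubcont : ∀ (e : Fin n → Fin (n+1)),
      Continuous fun t : ℝ => ((B + t • T).submatrix Fin.castSucc e) := by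
    intro e
    apply continuous_matrix
    intro i j
    simp only [Matrix.submatrix_apply, Matrix.add_apply, Matrix.smul_apply, smul_eq_mul]
    exact continuous_const.add (continuous_id.mul continuous_const)
  have hFc : Continuous F :=
    continuous_const.dotProduct
      (((hsubcont Fin.castSucc).matrix_adjugate).matrix_mulVec continuous_const)
  have hF'c : Continuous F' :=
    continuous_const.dotProduct
      (((hsubcont Fin.succ).matrix_adjugate).matrix_mulVec continuous_const)
  have hdense := dense_unit_det B T hTdet
  have heqon : Set.EqOn F F' {t : ℝ | IsUnit (B + t • T).det} := by
    intro t ht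
    have hskew' : (B + t • T)ᵀ = -(B + t • T) := by
      rw [Matrix.transpose_add, Matrix.transpose_smul, hskew, Tmat_skew m hm, smul_neg]
      abel
    have htoe' : ∀ i j i' j' : Fin (n + 1),
        (i : ℕ) + (j' : ℕ) = (i' : ℕ) + (j : ℕ) → (B + t • T) i j = (B + t • T) i' j' := by
      intro i j i' j' h
      simp only [Matrix.add_apply, Matrix.smul_apply, smul_eq_mul]
      rw [hToeplitz i j i' j' h, hT, Tmat_toeplitz m i j i' j' h]
    exact stmt_inv n ⟨m, hm⟩ (B + t • T) hskew' htoe' ht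
  have hFeq : F = F' := Continuous.ext_on hdense hFc hF'c heqon
  have h0 := congrFun hFeq 0
  simpa [hF, hF'] using h0
end

section
/- Let m be odd and let K be the m×m tridiagonal matrix with 1 on the superdiagonal and −1 on the subdiagonal. Then adj(K) = u·uᵀ, where u = (1,0,1,0,…,1)ᵀ, and consequently 1ᵀ·adj(K)·1 = ((m+1)/2)². -/
open Matrix

lemma tridet : ∀ n (A : Matrix (Fin n) (Fin n) ℝ),
    (∀ i j : Fin n, A i j =
      if (j : ℕ) = (i : ℕ) + 1 then 1 else if (i : ℕ) = (j : ℕ) + 1 then -1 else 0) →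
    A.det = if n % 2 = 0 then 1 else 0 := by
  intro n
  induction n using Nat.strong_induction_on with
  | _ n ih =>
    match n with
    | 0 => intro A hA; simp [Matrix.det_fin_zero]
    | 1 =>
      intro A hA
      rw [Matrix.det_fin_one, hA]
      norm_num
    | (k+2) =>
      intro A hA
      rw [Matrix.det_succ_row_zero]
      rw [Finset.sum_eq_single (1 : Fin (k+2))]
      · have hA01 : A 0 1 = 1 := by
          rw [hA, Fin.val_zero, Fin.val_one]; norm_num
        rw [hA01]
        set B := A.submatrix Fin.succ (Fin.succAbove 1) with hB
        have hs0 : ((Fin.succAbove 1 (0 : Fin (k+1))) : ℕ) = 0 := by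
          simp [Fin.succAbove]
        rw [Matrix.det_succ_column_zero]
        rw [Finset.sum_eq_single (0 : Fin (k+1))]
        · have hB00 : B 0 0 = -1 := by
            rw [hB]
            simp only [Matrix.submatrix_apply]
            rw [hA]
            simp [hs0]
          rw [hB00, Fin.succAbove_zero]
          have hC : ∀ i j : Fin k, (B.submatrix Fin.succ Fin.succ) i j =
              if (j : ℕ) = (i : ℕ) + 1 then 1 else if (i : ℕ) = (j : ℕ) + 1 then -1 else 0 := by
            intro i j
            simp only [Matrix.submatrix_apply, hB]
            rw [hA]
            have hval : ((Fin.succAbove 1 (j.succ)) : ℕ) = (j : ℕ) + 2 := by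
              rw [Fin.succAbove_of_le_castSucc]
              · simp
              · simp [Fin.le_def]
            simp only [Fin.val_succ, hval]
            congr 1 <;> [skip; congr 1] <;> simp [eq_iff_iff] <;> omega
          rw [ih k (by omega) _ hC]
          have h2 : (k+2) % 2 = k % 2 := by omega
          rw [h2, Fin.val_one, Fin.val_zero]
          split_ifs <;> norm_num
        · intro b _ hb
          have hBb0 : B b 0 = 0 := by
            rw [hB]
            simp only [Matrix.submatrix_apply]
            rw [hA]
            have hbv : (b : ℕ) ≠ 0 := fun h => hb (Fin.ext h)
            simp only [hs0, Fin.val_succ]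
            rw [if_neg (by omega), if_neg (by omega)]
          rw [hBb0]; ring
        · simp
      · intro b _ hb
        have hA0b : A 0 b = 0 := by
          have hbv : (b : ℕ) ≠ 1 := fun h => hb (Fin.ext (by rw [h, Fin.val_one]))
          rw [hA, Fin.val_zero]
          rw [if_neg (by omega), if_neg (by omega)]
        rw [hA0b]; ring
      · simp

lemma kerlem (n : ℕ) (K : Matrix (Fin (n+1)) (Fin (n+1)) ℝ)
    (hK : ∀ i j : Fin (n+1), K i j =
      if (j : ℕ) = (i : ℕ) + 1 then 1 else if (i : ℕ) = (j : ℕ) + 1 then -1 else 0)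
    (v : Fin (n+1) → ℝ) (hv : K.mulVec v = 0) :
    ∀ i : Fin (n+1), v i = v 0 * (if (i : ℕ) % 2 = 0 then 1 else 0) := by
  have hrow : ∀ i : Fin (n+1), ∑ j, K i j * v j = 0 := by
    intro i
    have := congrFun hv i
    simpa [Matrix.mulVec, dotProduct] using this
  have step1 : ∀ (h : 1 < n + 1), v ⟨1, h⟩ = 0 := by
    intro h
    have h0 := hrow 0
    rw [Finset.sum_eq_single (⟨1, h⟩ : Fin (n+1))] at h0
    · have : K 0 ⟨1, h⟩ = 1 := by rw [hK]; simp
      rw [this, one_mul] at h0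
      exact h0
    · intro b _ hb
      have hbv : (b : ℕ) ≠ 1 := fun hh => hb (Fin.ext hh)
      have : K 0 b = 0 := by
        rw [hK, Fin.val_zero]
        rw [if_neg (by omega), if_neg (by omega)]
      rw [this, zero_mul]
    · simp
  have step2 : ∀ t (h : t + 2 < n + 1), v ⟨t+2, h⟩ = v ⟨t, by omega⟩ := by
    intro t h
    set a : Fin (n+1) := ⟨t+2, h⟩ with ha
    set b : Fin (n+1) := ⟨t, by omega⟩ with hb
    have hab : a ≠ b := by
      intro hh
      have := congrArg Fin.val hh
      simp [ha, hb] at this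
    have hsplit : ∀ j : Fin (n+1), K ⟨t+1, by omega⟩ j * v j =
        (if j = a then v j else 0) + (if j = b then -(v j) else 0) := by
      intro j
      rw [hK]
      by_cases c1 : (j : ℕ) = t + 2
      · have hja : j = a := Fin.ext c1
        subst hja
        rw [if_pos (by simpa using c1), if_pos rfl, if_neg hab]
        ring
      · by_cases c2 : (j : ℕ) = t
        · have hjb : j = b := Fin.ext c2
          rw [if_neg (by simpa using c1), if_pos (by simp; omega),
            if_neg (fun hh => c1 (by rw [hh])), if_pos hjb]
          ring
        · rw [if_neg (by simpa using c1), if_neg (by simp; omega),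
            if_neg (fun hh => c1 (by rw [hh])), if_neg (fun hh => c2 (by rw [hh]))]
          ring
    have h0 := hrow ⟨t+1, by omega⟩
    rw [Finset.sum_congr rfl (fun j _ => hsplit j), Finset.sum_add_distrib,
      Finset.sum_ite_eq' Finset.univ a, Finset.sum_ite_eq' Finset.univ b] at h0
    simp at h0
    linarith
  intro i
  obtain ⟨iv, hiv⟩ := i
  induction iv using Nat.strong_induction_on with
  | _ iv ih =>
    match iv with
    | 0 => simp
    | 1 =>
      rw [step1 hiv]
      norm_num
    | (t+2) =>
      rw [step2 t hiv, ih t (by omega) (by omega)]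
      have : (t + 2) % 2 = t % 2 := by omega
      simp [this]

lemma sumrange : ∀ p : ℕ, ∑ i ∈ Finset.range (2*p+1), (if i % 2 = 0 then (1:ℝ) else 0)
    = p + 1 := by
  intro p
  induction p with
  | zero => rw [show 2*0+1 = 1 from rfl, Finset.sum_range_one]; norm_num
  | succ q ihq =>
    have h : 2 * (q+1) + 1 = (2*q+1) + 1 + 1 := by ring
    rw [h, Finset.sum_range_succ, Finset.sum_range_succ, ihq]
    have h1 : (2*q+1) % 2 = 1 := by omega
    have h2 : (2*q+1+1) % 2 = 0 := by omega
    rw [h1, h2]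
    push_cast
    norm_num

theorem stmt_11 (m : ℕ) (hm : Odd m)
    (K : Matrix (Fin m) (Fin m) ℝ)
    (hK : ∀ i j : Fin m, K i j =
      if (j : ℕ) = (i : ℕ) + 1 then 1 else if (i : ℕ) = (j : ℕ) + 1 then -1 else 0)
    (u : Fin m → ℝ) (hu : ∀ i : Fin m, u i = if (i : ℕ) % 2 = 0 then 1 else 0) :
    K.adjugate = Matrix.of (fun i j => u i * u j) ∧
      dotProduct (fun _ => (1 : ℝ)) (K.adjugate.mulVec (fun _ => (1 : ℝ))) =
        (((m : ℝ) + 1) / 2) ^ 2 := by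
  obtain ⟨p, hp⟩ := hm
  obtain ⟨q, rfl⟩ : ∃ q, m = 2 * q + 1 := ⟨(m - 1) / 2, by omega⟩
  clear hp
  have hskew : ∀ i j, K i j = -K j i := by
    intro i j
    rw [hK i j, hK j i]
    split_ifs <;> first | omega | norm_num
  have hdet : K.det = 0 := by
    have hT : K.transpose = -K := by
      ext i j
      rw [Matrix.transpose_apply, Matrix.neg_apply]
      exact hskew j i
    have h1 : K.det = -K.det := by
      conv_lhs => rw [← Matrix.det_transpose K]
      rw [hT, Matrix.det_neg, Fintype.card_fin]
      have : (-1 : ℝ) ^ (2*q+1) = -1 := Odd.neg_one_pow ⟨q, by ring⟩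
      rw [this]
      ring
    linarith
  have hKadj : K * K.adjugate = 0 := by
    rw [Matrix.mul_adjugate, hdet, zero_smul]
  have hadjK : K.adjugate * K = 0 := by
    rw [Matrix.adjugate_mul, hdet, zero_smul]
  have hcolv : ∀ j, K.mulVec (fun i => K.adjugate i j) = 0 := by
    intro j
    funext i
    have h := congrFun (congrFun hKadj i) j
    rw [Matrix.mul_apply] at h
    simpa [Matrix.mulVec, dotProduct] using h
  have hcol : ∀ i j : Fin (2*q+1),
      K.adjugate i j = K.adjugate 0 j * (if (i : ℕ) % 2 = 0 then 1 else 0) :=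
    fun i j => kerlem (2*q) K hK _ (hcolv j) i
  have hrowv : K.mulVec (fun j => K.adjugate 0 j) = 0 := by
    funext i
    have h : ∑ j, K.adjugate 0 j * K j i = 0 := by
      simpa [Matrix.mul_apply] using congrFun (congrFun hadjK 0) i
    simp only [Matrix.mulVec, dotProduct, Pi.zero_apply]
    calc ∑ j, K i j * K.adjugate 0 j
        = ∑ j, -(K.adjugate 0 j * K j i) :=
          Finset.sum_congr rfl (fun j _ => by rw [hskew i j]; ring)
      _ = -(∑ j, K.adjugate 0 j * K j i) := Finset.sum_neg_distrib _
      _ = 0 := by rw [h, neg_zero]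
  have hrow : ∀ j : Fin (2*q+1),
      K.adjugate 0 j = K.adjugate 0 0 * (if (j : ℕ) % 2 = 0 then 1 else 0) :=
    fun j => kerlem (2*q) K hK _ hrowv j
  have ha00 : K.adjugate 0 0 = 1 := by
    rw [Matrix.adjugate_apply]
    rw [Matrix.det_succ_row_zero]
    rw [Finset.sum_eq_single (0 : Fin (2*q+1))]
    · have hM0 : (K.updateRow 0 (Pi.single 0 1)) 0 0 = 1 := by
        rw [Matrix.updateRow_self]
        simp
      rw [hM0]
      have hsub : ∀ i j : Fin (2*q),
          ((K.updateRow 0 (Pi.single 0 1)).submatrix Fin.succ (Fin.succAbove 0)) i j =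
          if (j : ℕ) = (i : ℕ) + 1 then 1 else if (i : ℕ) = (j : ℕ) + 1 then -1 else 0 := by
        intro i j
        simp only [Matrix.submatrix_apply, Fin.succAbove_zero]
        rw [Matrix.updateRow_ne (Fin.succ_ne_zero i), hK]
        simp only [Fin.val_succ]
        congr 1 <;> [skip; congr 1] <;> simp [eq_iff_iff] <;> omega
      rw [tridet _ _ hsub]
      have : (2*q) % 2 = 0 := by omega
      rw [this, if_pos rfl, Fin.val_zero]
      norm_num
    · intro b _ hb
      have : (K.updateRow 0 (Pi.single 0 1)) 0 b = 0 := by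
        rw [Matrix.updateRow_self]
        exact Pi.single_eq_of_ne hb 1
      rw [this]; ring
    · simp
  have hadj_eq : K.adjugate = Matrix.of (fun i j => u i * u j) := by
    ext i j
    rw [Matrix.of_apply, hcol i j, hrow j, ha00, one_mul, hu, hu]
    ring
  refine ⟨hadj_eq, ?_⟩
  rw [hadj_eq]
  have hsum : ∑ i : Fin (2*q+1), u i = q + 1 := by
    calc ∑ i : Fin (2*q+1), u i
        = ∑ i : Fin (2*q+1), (if (i : ℕ) % 2 = 0 then (1:ℝ) else 0) :=
          Finset.sum_congr rfl (fun i _ => hu i)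
      _ = ∑ t ∈ Finset.range (2*q+1), (if t % 2 = 0 then (1:ℝ) else 0) :=
          Fin.sum_univ_eq_sum_range (fun t => if t % 2 = 0 then (1:ℝ) else 0) (2*q+1)
      _ = q + 1 := sumrange q
  have : dotProduct (fun _ => (1 : ℝ))
      ((Matrix.of (fun i j => u i * u j)).mulVec (fun _ => (1 : ℝ)))
      = (∑ i : Fin (2*q+1), u i) * (∑ j : Fin (2*q+1), u j) := by
    rw [Finset.sum_mul_sum]
    simp [dotProduct, Matrix.mulVec, Matrix.of_apply]
  rw [this, hsum]
  push_cast
  ring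
end

section
/- Let A be an n×n real matrix satisfying A + Aᵀ = α·w·wᵀ for some α ∈ ℝ and nonzero w ∈ ℝ^n. Then √(det A_{n-1}(1,1) · det A_{n-1}(2,2)) = |(det A_{n-1}(1,2) + det A_{n-1}(2,1))/2|. -/
open Matrix Polynomial

lemma adj_minor {n : ℕ} (A : Matrix (Fin (n + 1)) (Fin (n + 1)) ℝ) (i j : Fin (n + 1)) :
    adjugate A i j = (-1 : ℝ) ^ ((i : ℕ) + (j : ℕ)) *
      (A.submatrix j.succAbove i.succAbove).det := by
  rw [Matrix.adjugate_apply, Matrix.det_succ_row _ j]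
  have hsub : ∀ k : Fin (n + 1),
      (A.updateRow j (Pi.single i 1)).submatrix j.succAbove k.succAbove
        = A.submatrix j.succAbove k.succAbove := by
    intro k
    ext r s
    simp [Matrix.updateRow_ne (Fin.succAbove_ne j r)]
  rw [Finset.sum_eq_single i]
  · rw [Matrix.updateRow_self, Pi.single_eq_same, hsub]
    ring_nf
  · intro k _ hk
    rw [Matrix.updateRow_self, Pi.single_eq_of_ne hk]
    ring
  · intro h
    exact absurd (Finset.mem_univ i) h

lemma conj_ww {N : ℕ} (B C : Matrix (Fin N) (Fin N) ℝ) (x y : Fin N → ℝ) :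
    B * Matrix.of (fun i j => x i * y j) * Cᵀ
      = Matrix.of (fun i j => (B *ᵥ x) i * (C *ᵥ y) j) := by
  ext i j
  simp only [Matrix.mul_apply, Matrix.of_apply, Matrix.transpose_apply, Matrix.mulVec,
    dotProduct]
  rw [Finset.sum_mul_sum]
  rw [Finset.sum_comm]
  refine Finset.sum_congr rfl fun k _ => ?_
  rw [Finset.sum_mul]
  exact Finset.sum_congr rfl fun l _ => by ring

lemma key_inv {n : ℕ} (A : Matrix (Fin (n + 1)) (Fin (n + 1)) ℝ) (α : ℝ)
    (w : Fin (n + 1) → ℝ)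
    (hA : A + Aᵀ = α • Matrix.of (fun i j => w i * w j)) (h : IsUnit A.det) :
    4 * ((A.submatrix Fin.castSucc Fin.castSucc).det * (A.submatrix Fin.succ Fin.succ).det)
      = ((A.submatrix Fin.castSucc Fin.succ).det
          + (A.submatrix Fin.succ Fin.castSucc).det) ^ 2 := by
  set u := A⁻¹ *ᵥ w with hu
  have h1 : A⁻¹ + A⁻¹ᵀ = α • Matrix.of (fun i j => u i * u j) := by
    have e1 : A⁻¹ * (A + Aᵀ) * A⁻¹ᵀ = A⁻¹ + A⁻¹ᵀ := by
      rw [Matrix.transpose_nonsing_inv, mul_add, add_mul,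
        Matrix.nonsing_inv_mul A h, Matrix.mul_assoc,
        Matrix.mul_nonsing_inv Aᵀ (Matrix.isUnit_det_transpose A h), one_mul,
        Matrix.mul_one]
      exact add_comm _ _
    have e2 : A⁻¹ * (α • Matrix.of (fun i j => w i * w j)) * A⁻¹ᵀ
        = α • Matrix.of (fun i j => u i * u j) := by
      rw [Matrix.mul_smul, Matrix.smul_mul, conj_ww, hu]
    rw [← e1, hA, e2]
  have hadjA : adjugate A = A.det • A⁻¹ := by
    calc adjugate A = (A⁻¹ * A) * adjugate A := by rw [Matrix.nonsing_inv_mul A h, one_mul]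
    _ = A⁻¹ * (A * adjugate A) := by rw [Matrix.mul_assoc]
    _ = A.det • A⁻¹ := by rw [Matrix.mul_adjugate, Matrix.mul_smul, Matrix.mul_one]
  have h2 : ∀ i j, adjugate A i j + adjugate A j i = (α * A.det) * (u i * u j) := by
    intro i j
    have e := congrFun (congrFun h1 i) j
    simp only [Matrix.add_apply, Matrix.transpose_apply, Matrix.smul_apply, Matrix.of_apply,
      smul_eq_mul] at e
    have ha : ∀ i j, adjugate A i j = A.det * A⁻¹ i j := by
      intro i j; rw [hadjA]; simp [Matrix.smul_apply]
    rw [ha i j, ha j i]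
    linear_combination A.det * e
  set a := (A.submatrix Fin.castSucc Fin.castSucc).det with hva
  set d := (A.submatrix Fin.succ Fin.succ).det with hvd
  set b := (A.submatrix Fin.castSucc Fin.succ).det with hvb
  set c := (A.submatrix Fin.succ Fin.castSucc).det with hvc
  have mm : ∀ i j : Fin (n + 1),
      (-1 : ℝ) ^ ((i : ℕ) + (j : ℕ)) * (A.submatrix j.succAbove i.succAbove).det
        + (-1 : ℝ) ^ ((j : ℕ) + (i : ℕ)) * (A.submatrix i.succAbove j.succAbove).det
        = (α * A.det) * (u i * u j) := by
    intro i j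
    rw [← adj_minor, ← adj_minor]
    exact h2 i j
  have h00 := mm 0 0
  simp only [Fin.val_zero, Fin.succAbove_zero, add_zero, pow_zero, one_mul, ← hvd] at h00
  have hll := mm (Fin.last n) (Fin.last n)
  simp only [Fin.val_last, Fin.succAbove_last, ← two_mul, pow_mul, neg_one_sq, one_pow,
    one_mul, ← hva] at hll
  have h0l := mm 0 (Fin.last n)
  simp only [Fin.val_zero, Fin.val_last, Fin.succAbove_zero, Fin.succAbove_last, zero_add,
    add_zero, ← hvb, ← hvc] at h0l
  have hsq : ((-1 : ℝ) ^ n) ^ 2 = 1 := by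
    rw [← pow_mul, mul_comm, pow_mul]; norm_num
  have key : ((-1 : ℝ) ^ n * b + (-1 : ℝ) ^ n * c) ^ 2
      = (2 * (A.submatrix Fin.castSucc Fin.castSucc).det) * (d + d) := by
    rw [h0l, hll, h00]; ring
  have key2 : ((-1 : ℝ) ^ n * b + (-1 : ℝ) ^ n * c) ^ 2 = (b + c) ^ 2 := by
    rw [← mul_add, mul_pow, hsq, one_mul]
  rw [← hva] at key
  rw [key2] at key
  linarith

lemma exists_skew_unit {N : ℕ} (hN : Even N) :
    ∃ J : Matrix (Fin N) (Fin N) ℝ, Jᵀ = -J ∧ IsUnit J.det := by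
  obtain ⟨m, rfl⟩ := hN
  let e : Fin m ⊕ Fin m ≃ Fin (m + m) := finSumFinEquiv
  refine ⟨reindex e e (fromBlocks 0 1 (-1) 0), ?_, ?_⟩
  · ext i j
    rcases h1 : e.symm i with a | a <;> rcases h2 : e.symm j with b | b <;>
      simp [Matrix.reindex_apply, Matrix.submatrix_apply, Matrix.transpose_apply, h1, h2,
        Matrix.one_apply]
    all_goals exact if_congr eq_comm rfl rfl
  · rw [Matrix.det_reindex_self]
    apply Matrix.isUnit_det_of_right_inverse (B := fromBlocks 0 (-1) 1 0)
    rw [Matrix.fromBlocks_multiply]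
    simp [Matrix.fromBlocks_one]

lemma exists_good {n : ℕ} (w : Fin (n + 1) → ℝ) (hw : w ≠ 0) :
    ∃ (M : Matrix (Fin (n + 1)) (Fin (n + 1)) ℝ) (c : ℝ),
      M + Mᵀ = c • Matrix.of (fun i j => w i * w j) ∧ IsUnit M.det := by
  rcases Nat.even_or_odd (n + 1) with he | ho
  · obtain ⟨J, hskew, hdet⟩ := exists_skew_unit he
    refine ⟨J, 0, ?_, hdet⟩
    rw [hskew]
    simp
  · have hn : Even n := by
      rcases ho with ⟨k, hk⟩
      exact ⟨k, by omega⟩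
    obtain ⟨J, hskew, hJdet⟩ := exists_skew_unit (N := n) hn
    obtain ⟨i₀, hi₀⟩ := Function.ne_iff.mp hw
    simp only [Pi.zero_apply] at hi₀
    set ew : Fin (n + 1) → ℝ := Pi.single i₀ (1 : ℝ) with hew
    let ε : Fin (n + 1) ≃ (Fin n ⊕ Unit) :=
      (finSuccEquiv' i₀).trans (Equiv.optionEquivSumPUnit.{0,0} _)
    have hεi₀ : ε i₀ = Sum.inr () := by
      simp [ε, finSuccEquiv'_at]
    have hεne : ∀ i, i ≠ i₀ → ∃ k, ε i = Sum.inl k := by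
      intro i hi
      rcases h : ε i with k | u
      · exact ⟨k, rfl⟩
      · exact absurd (ε.injective (h.trans hεi₀.symm)) hi
    set O : Matrix Unit Unit ℝ := Matrix.of (fun _ _ => (1 : ℝ)) with hO
    set M₀ : Matrix (Fin (n + 1)) (Fin (n + 1)) ℝ :=
      reindex ε.symm ε.symm (fromBlocks J 0 0 O) with hM₀
    have hM₀T : M₀ᵀ = reindex ε.symm ε.symm (fromBlocks Jᵀ 0 0 O) := by
      rw [hM₀, Matrix.transpose_reindex, Matrix.fromBlocks_transpose]
      congr 1 <;> rfl
    have hblocks : (fromBlocks J 0 0 O + fromBlocks Jᵀ 0 0 O)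
        = fromBlocks 0 0 0 (Matrix.of fun _ _ => (2 : ℝ)) := by
      rw [hskew, Matrix.fromBlocks_add]
      congr 1
      all_goals try simp
      all_goals ext ⟨⟩ ⟨⟩; norm_num [hO]
    have hsum : M₀ + M₀ᵀ
        = reindex ε.symm ε.symm (fromBlocks 0 0 0 (Matrix.of fun _ _ => (2 : ℝ))) := by
      rw [hM₀, hM₀T, Matrix.reindex_apply, Matrix.reindex_apply, Matrix.reindex_apply,
        ← hblocks]
      ext i j
      simp [Matrix.submatrix_apply, Matrix.add_apply]
    have hM₀sum : M₀ + M₀ᵀ = (2 : ℝ) • Matrix.of (fun i j => ew i * ew j) := by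
      rw [hsum]
      ext i j
      rw [Matrix.reindex_apply, Matrix.submatrix_apply, Matrix.smul_apply, Matrix.of_apply,
        Equiv.symm_symm]
      by_cases hi : i = i₀
      · by_cases hj : j = i₀
        · subst hi; subst hj
          rw [hεi₀]
          simp [hew, Matrix.fromBlocks_apply₂₂]
        · obtain ⟨k, hk⟩ := hεne j hj
          rw [hk]
          rcases h' : ε i with a | a <;>
            simp [hew, Pi.single_eq_of_ne hj, Matrix.fromBlocks]
      · obtain ⟨k, hk⟩ := hεne i hi
        rw [hk]
        rcases h' : ε j with a | a <;>
          simp [hew, Pi.single_eq_of_ne hi, Matrix.fromBlocks]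
    set C : Matrix (Fin (n + 1)) (Fin (n + 1)) ℝ := updateCol 1 i₀ w with hC
    have hCe : C *ᵥ ew = w := by
      funext i
      rw [hew, Matrix.mulVec_single]
      simp [hC, Matrix.updateCol_self]
    have hCdet : C.det = w i₀ := by
      rw [hC, ← Matrix.cramer_apply, Matrix.cramer_one]
      rfl
    have hM₀det : IsUnit M₀.det := by
      rw [hM₀, Matrix.det_reindex_self, Matrix.det_fromBlocks_zero₂₁]
      have : O.det = 1 := by rw [Matrix.det_unique, hO]; rfl
      rw [this, mul_one]
      exact hJdet
    refine ⟨C * M₀ * Cᵀ, 2, ?_, ?_⟩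
    · have : C * M₀ * Cᵀ + (C * M₀ * Cᵀ)ᵀ = C * (M₀ + M₀ᵀ) * Cᵀ := by
        rw [Matrix.mul_add]
        rw [Matrix.add_mul]
        congr 1
        rw [Matrix.transpose_mul, Matrix.transpose_mul, Matrix.transpose_transpose,
          Matrix.mul_assoc]
      rw [this, hM₀sum, Matrix.mul_smul, Matrix.smul_mul, conj_ww, hCe]
    · rw [Matrix.det_mul, Matrix.det_mul, Matrix.det_transpose]
      exact ((isUnit_iff_ne_zero.mpr (hCdet ▸ hi₀)).mul hM₀det).mul
        (isUnit_iff_ne_zero.mpr (hCdet ▸ hi₀))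

theorem stmt_13 (n : ℕ) (A : Matrix (Fin (n + 1)) (Fin (n + 1)) ℝ)
    (α : ℝ) (w : Fin (n + 1) → ℝ) (hw : w ≠ 0)
    (hA : A + Aᵀ = α • Matrix.of (fun i j => w i * w j)) :
    Real.sqrt ((A.submatrix Fin.castSucc Fin.castSucc).det *
        (A.submatrix Fin.succ Fin.succ).det) =
      |((A.submatrix Fin.castSucc Fin.succ).det +
          (A.submatrix Fin.succ Fin.castSucc).det) / 2| := by
  obtain ⟨M, c, hM, hMdet⟩ := exists_good w hw
  set B : Matrix (Fin (n + 1)) (Fin (n + 1)) ℝ := M - A with hB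
  set X : ℝ → Matrix (Fin (n + 1)) (Fin (n + 1)) ℝ := fun s => A + s • B with hX
  have hA' : ∀ i j, A i j + A j i = α * (w i * w j) := by
    intro i j
    have := congrFun (congrFun hA i) j
    simpa [Matrix.add_apply, Matrix.transpose_apply, Matrix.smul_apply] using this
  have hM' : ∀ i j, M i j + M j i = c * (w i * w j) := by
    intro i j
    have := congrFun (congrFun hM i) j
    simpa [Matrix.add_apply, Matrix.transpose_apply, Matrix.smul_apply] using this
  have hclass : ∀ s : ℝ, X s + (X s)ᵀ = (α + s * (c - α)) • Matrix.of (fun i j => w i * w j) := by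
    intro s
    ext i j
    simp only [hX, hB, Matrix.add_apply, Matrix.transpose_apply, Matrix.smul_apply,
      Matrix.sub_apply, Matrix.of_apply, smul_eq_mul]
    have h1 := hA' i j
    have h2 := hM' i j
    linear_combination (1 - s) * h1 + s * h2
  -- polynomial
  set P : Matrix (Fin (n + 1)) (Fin (n + 1)) ℝ[X] :=
    A.map Polynomial.C + (Polynomial.X : ℝ[X]) • B.map Polynomial.C with hP
  have hev : ∀ s : ℝ, (X s).det = Polynomial.eval s P.det := by
    intro s
    have h := RingHom.map_det (Polynomial.evalRingHom s) P
    have h2 : (Polynomial.evalRingHom s).mapMatrix P = X s := by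
      ext i j
      simp [hP, hX, Matrix.map_apply, Matrix.add_apply, Matrix.smul_apply]
      ring
    rw [← h2, ← h]
    rfl
  have hPne : P.det ≠ 0 := by
    intro h0
    have h1 : (X 1).det = 0 := by rw [hev 1, h0, Polynomial.eval_zero]
    have h2 : X 1 = M := by
      simp [hX, hB]
    rw [h2] at h1
    exact hMdet.ne_zero h1
  have hfin : {s : ℝ | (X s).det = 0}.Finite := by
    have : {s : ℝ | (X s).det = 0} ⊆ {s : ℝ | Polynomial.IsRoot P.det s} := by
      intro s hs
      simp only [Set.mem_setOf_eq, Polynomial.IsRoot] at *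
      rw [← hev s]; exact hs
    exact (Polynomial.finite_setOf_isRoot hPne).subset this
  have hdense : Dense {s : ℝ | (X s).det = 0}ᶜ := Set.Countable.dense_compl ℝ hfin.countable
  -- continuity
  set F : ℝ → ℝ := fun s =>
    4 * (((X s).submatrix Fin.castSucc Fin.castSucc).det *
        ((X s).submatrix Fin.succ Fin.succ).det)
      - (((X s).submatrix Fin.castSucc Fin.succ).det
          + ((X s).submatrix Fin.succ Fin.castSucc).det) ^ 2 with hF
  have hXcont : Continuous X := by
    apply continuous_const.add
    exact (continuous_id.smul continuous_const)
  have hFcont : Continuous F := by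
    apply Continuous.sub
    · exact continuous_const.mul
        (((hXcont.matrix_submatrix _ _).matrix_det).mul
          ((hXcont.matrix_submatrix _ _).matrix_det))
    · exact (((hXcont.matrix_submatrix _ _).matrix_det).add
        ((hXcont.matrix_submatrix _ _).matrix_det)).pow 2
  have hEq : Set.EqOn F (fun _ => (0 : ℝ)) {s : ℝ | (X s).det = 0}ᶜ := by
    intro s hs
    have hdet : IsUnit (X s).det := isUnit_iff_ne_zero.mpr (by simpa using hs)
    have := key_inv (X s) (α + s * (c - α)) w (hclass s) hdet
    simp only [hF]
    linarith
  have hF0 : F = fun _ => (0 : ℝ) := Continuous.ext_on hdense hFcont continuous_const hEq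
  have hXA : X 0 = A := by simp [hX]
  have hkey : 4 * ((A.submatrix Fin.castSucc Fin.castSucc).det *
        (A.submatrix Fin.succ Fin.succ).det)
      = ((A.submatrix Fin.castSucc Fin.succ).det
          + (A.submatrix Fin.succ Fin.castSucc).det) ^ 2 := by
    have := congrFun hF0 0
    simp only [hF, hXA] at this
    linarith
  have h2 : (A.submatrix Fin.castSucc Fin.castSucc).det * (A.submatrix Fin.succ Fin.succ).det
      = (((A.submatrix Fin.castSucc Fin.succ).det
          + (A.submatrix Fin.succ Fin.castSucc).det) / 2) ^ 2 := by
    rw [div_pow]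
    linarith
  rw [h2, Real.sqrt_sq_eq_abs]
end

section
/- (Bayat–Teimoori) Let n ≥ 2 and let A be an n×n real matrix with A + Aᵀ = α·J_n for some α ∈ ℝ. Then √(det A_{n-1}(1,1) · det A_{n-1}(2,2)) = |(det A_{n-1}(1,2) + det A_{n-1}(2,1))/2|. -/
open Matrix

private lemma adj_sq {R : Type*} [CommRing R] [IsDomain R] {m : ℕ}
    (A : Matrix (Fin m) (Fin m) R) (t : R)
    (hA : A + Aᵀ = t • Matrix.of (fun _ _ => (1 : R)))
    (hdet : A.det ≠ 0) (i j : Fin m) :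
    (adjugate A i j + adjugate A j i) ^ 2 =
      4 * (adjugate A i i * adjugate A j j) := by
  set B := adjugate A with hB
  have h1 : B * (A + Aᵀ) * Bᵀ = A.det • (Bᵀ + B) := by
    have hBA : B * A = A.det • 1 := adjugate_mul A
    rw [mul_add, add_mul]
    have e1 : B * A * Bᵀ = A.det • Bᵀ := by
      rw [hBA, smul_mul_assoc, one_mul]
    have e2 : B * Aᵀ * Bᵀ = A.det • B := by
      rw [mul_assoc, ← transpose_mul, hBA, transpose_smul, transpose_one,
        mul_smul_comm, mul_one]
    rw [e1, e2, smul_add]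
  have key : ∀ p q : Fin m,
      A.det * (B p q + B q p) = t * (∑ k, B p k) * (∑ k, B q k) := by
    intro p q
    have h2 : (B * (A + Aᵀ) * Bᵀ) p q = t * (∑ k, B p k) * (∑ k, B q k) := by
      rw [hA]
      have : B * (t • Matrix.of (fun _ _ => (1 : R))) * Bᵀ
          = t • (B * Matrix.of (fun _ _ => (1 : R)) * Bᵀ) := by
        rw [Matrix.mul_smul, Matrix.smul_mul]
      rw [this]
      simp only [Matrix.smul_apply, mul_apply, transpose_apply, Matrix.of_apply, smul_eq_mul,
        mul_one]
      rw [← Finset.mul_sum]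
      ring
    have h3 : (B * (A + Aᵀ) * Bᵀ) p q = A.det * (B q p + B p q) := by
      rw [h1]
      simp only [Matrix.smul_apply, Matrix.add_apply, transpose_apply, smul_eq_mul]
    rw [← h2, h3]; ring
  have hd2 : A.det ^ 2 ≠ 0 := pow_ne_zero _ hdet
  apply mul_left_cancel₀ hd2
  calc A.det ^ 2 * (B i j + B j i) ^ 2
      = (A.det * (B i j + B j i)) ^ 2 := by ring
    _ = (t * (∑ k, B i k) * (∑ k, B j k)) ^ 2 := by rw [key i j]
    _ = (t * (∑ k, B i k) * (∑ k, B i k)) *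
        (t * (∑ k, B j k) * (∑ k, B j k)) := by ring
    _ = (A.det * (B i i + B i i)) * (A.det * (B j j + B j j)) := by
        rw [key i i, key j j]
    _ = A.det ^ 2 * (4 * (B i i * B j j)) := by ring

private noncomputable def wfun {m : ℕ} (A : Matrix (Fin m) (Fin m) ℝ) (α : ℝ) :
    (Fin m × Fin m) ⊕ Unit → ℝ
  | Sum.inl (p, q) => (A p q - α / 2) / 2
  | Sum.inr _ => α / 2

private lemma real_adj_identity {m : ℕ} (A : Matrix (Fin m) (Fin m) ℝ) (α : ℝ)
    (hA : A + Aᵀ = α • Matrix.of (fun _ _ => (1 : ℝ))) (i j : Fin m) :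
    (adjugate A i j + adjugate A j i) ^ 2 =
      4 * (adjugate A i i * adjugate A j j) := by
  classical
  -- generic matrix over a polynomial ring
  set σ := (Fin m × Fin m) ⊕ Unit
  set R := MvPolynomial σ ℝ
  set Ag : Matrix (Fin m) (Fin m) R :=
    Matrix.of (fun i j => MvPolynomial.X (Sum.inl (i, j)) -
      MvPolynomial.X (Sum.inl (j, i)) + MvPolynomial.X (Sum.inr ())) with hAg
  have hAgsum : Ag + Agᵀ =
      ((2 : R) * MvPolynomial.X (Sum.inr ())) • Matrix.of (fun _ _ => (1 : R)) := by
    ext i j : 1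
    simp only [hAg, Matrix.add_apply, transpose_apply, Matrix.of_apply, Matrix.smul_apply, smul_eq_mul,
      mul_one]
    ring
  have hdet : Ag.det ≠ 0 := by
    intro h
    set v : σ → ℝ := fun s => match s with
      | Sum.inl (i, j) => if i < j then (1 : ℝ) else 0
      | Sum.inr _ => 1 with hv
    have h0 : ((MvPolynomial.eval v : R →+* ℝ).mapMatrix Ag).det = 0 := by
      rw [← RingHom.map_det, h, map_zero]
    have htri : ((MvPolynomial.eval v : R →+* ℝ).mapMatrix Ag).BlockTriangular id := by
      intro i j hij
      simp only [RingHom.mapMatrix_apply, map_apply, hAg, Matrix.of_apply, map_add,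
        map_sub, MvPolynomial.eval_X, hv, id_eq] at hij ⊢
      rw [if_neg (by exact not_lt_of_gt hij), if_pos hij]
      ring
    rw [Matrix.det_of_upperTriangular htri] at h0
    have : ∀ k : Fin m, ((MvPolynomial.eval v : R →+* ℝ).mapMatrix Ag) k k = 1 := by
      intro k
      simp only [RingHom.mapMatrix_apply, map_apply, hAg, Matrix.of_apply, map_add,
        map_sub, MvPolynomial.eval_X, hv]
      simp
    rw [Finset.prod_congr rfl (fun k _ => this k)] at h0
    simp at h0
  have hid := adj_sq Ag ((2 : R) * MvPolynomial.X (Sum.inr ())) hAgsum hdet i j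
  -- specialize to the actual matrix
  have hmap : (MvPolynomial.eval (wfun A α) : R →+* ℝ).mapMatrix Ag = A := by
    ext p q
    have hpq : A p q + A q p = α := by
      have := congrFun (congrFun hA p) q
      simpa using this
    simp only [RingHom.mapMatrix_apply, map_apply, hAg, Matrix.of_apply, map_add, map_sub,
      MvPolynomial.eval_X]
    show wfun A α (Sum.inl (p, q)) - wfun A α (Sum.inl (q, p)) + wfun A α (Sum.inr ()) = A p q
    simp only [wfun]
    linarith
  have hadj : (MvPolynomial.eval (wfun A α) : R →+* ℝ).mapMatrix Ag.adjugate = adjugate A := by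
    rw [RingHom.map_adjugate, hmap]
  have hentry : ∀ p q : Fin m,
      (MvPolynomial.eval (wfun A α)) (Ag.adjugate p q) = adjugate A p q := by
    intro p q
    have := congrFun (congrFun hadj p) q
    simpa using this
  have h2 := congrArg (MvPolynomial.eval (wfun A α)) hid
  simp only [map_pow, _root_.map_add, _root_.map_mul, map_ofNat, hentry] at h2
  exact h2

/-- Bayat–Teimoori, stated for matrices of size `n + 2 ≥ 2`. -/
theorem stmt_14 (n : ℕ) (A : Matrix (Fin (n + 2)) (Fin (n + 2)) ℝ)
    (α : ℝ) (hA : A + Aᵀ = α • Matrix.of (fun _ _ => (1 : ℝ))) :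
    Real.sqrt ((A.submatrix Fin.castSucc Fin.castSucc).det *
        (A.submatrix Fin.succ Fin.succ).det) =
      |((A.submatrix Fin.castSucc Fin.succ).det +
          (A.submatrix Fin.succ Fin.castSucc).det) / 2| := by
  have hid := real_adj_identity A α hA 0 (Fin.last (n + 1))
  have e00 : adjugate A 0 0 = (A.submatrix Fin.succ Fin.succ).det := by
    rw [adjugate_fin_succ_eq_det_submatrix]
    simp [Fin.succAbove_zero]
  have ell : adjugate A (Fin.last (n + 1)) (Fin.last (n + 1)) =
      (A.submatrix Fin.castSucc Fin.castSucc).det := by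
    rw [adjugate_fin_succ_eq_det_submatrix, Fin.succAbove_last]
    have h1 : ((-1 : ℝ)) ^ ((Fin.last (n+1) : ℕ) + (Fin.last (n+1) : ℕ)) = 1 := by
      rw [Fin.val_last, ← two_mul, pow_mul]
      norm_num
    rw [h1, one_mul]
  have e0l : adjugate A 0 (Fin.last (n + 1)) =
      (-1 : ℝ) ^ (n + 1) * (A.submatrix Fin.castSucc Fin.succ).det := by
    rw [adjugate_fin_succ_eq_det_submatrix]
    simp [Fin.succAbove_last, Fin.succAbove_zero, Fin.val_last]
  have el0 : adjugate A (Fin.last (n + 1)) 0 =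
      (-1 : ℝ) ^ (n + 1) * (A.submatrix Fin.succ Fin.castSucc).det := by
    rw [adjugate_fin_succ_eq_det_submatrix]
    simp [Fin.succAbove_last, Fin.succAbove_zero, Fin.val_last]
  rw [e00, ell, e0l, el0] at hid
  set a := (A.submatrix Fin.castSucc Fin.castSucc).det
  set b := (A.submatrix Fin.succ Fin.succ).det
  set c := (A.submatrix Fin.castSucc Fin.succ).det
  set d := (A.submatrix Fin.succ Fin.castSucc).det
  have hsq : ((-1 : ℝ) ^ (n + 1)) ^ 2 = 1 := by
    rw [← pow_mul, mul_comm, pow_mul]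
    norm_num
  have hkey : (c + d) ^ 2 = 4 * (a * b) := by
    have : ((-1 : ℝ) ^ (n + 1) * c + (-1 : ℝ) ^ (n + 1) * d) ^ 2
        = ((-1 : ℝ) ^ (n + 1)) ^ 2 * (c + d) ^ 2 := by ring
    rw [this, hsq, one_mul] at hid
    linarith [hid]
  have : a * b = ((c + d) / 2) ^ 2 := by nlinarith [hkey]
  rw [this, Real.sqrt_sq_eq_abs]
end

section
/- If A is an n×n real matrix with (A+Aᵀ)/2 positive semidefinite, then det(A) ≥ 0; if (A+Aᵀ)/2 is positive definite, then det(A) > 0. -/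
open Matrix Polynomial

lemma eval_charpoly' {n : ℕ} (M : Matrix (Fin n) (Fin n) ℝ) (t : ℝ) :
    M.charpoly.eval t = (t • (1 : Matrix (Fin n) (Fin n) ℝ) - M).det := by
  rw [Matrix.charpoly, eval_det, matPolyEquiv_charmatrix]
  congr 1
  simp [Matrix.scalar, smul_eq_diagonal_mul]

lemma dotProduct_self_pos' {n : ℕ} {x : Fin n → ℝ} (hx : x ≠ 0) : 0 < x ⬝ᵥ x := by
  rcases lt_or_eq_of_le (Finset.sum_nonneg fun i _ => mul_self_nonneg (x i)) with h | h
  · exact h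
  · exact absurd (dotProduct_self_eq_zero.1 h.symm) hx

-- strictly accretive implies invertible
lemma det_ne_zero_of_acc {n : ℕ} (B : Matrix (Fin n) (Fin n) ℝ)
    (h : (((1 / 2 : ℝ) • (B + Bᵀ)).PosDef)) : B.det ≠ 0 := by
  intro hdet
  obtain ⟨v, hv, hBv⟩ := (Matrix.exists_mulVec_eq_zero_iff).2 hdet
  have := h.dotProduct_mulVec_pos hv
  simp only [star_trivial, smul_mulVec, add_mulVec, hBv, zero_add,
    dotProduct_smul] at this
  rw [dotProduct_mulVec, vecMul_transpose, hBv, zero_dotProduct] at this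
  simp at this

lemma shift_posdef {n : ℕ} (B : Matrix (Fin n) (Fin n) ℝ)
    (hherm : ((1 / 2 : ℝ) • (B + Bᵀ)).IsHermitian)
    (hq : ∀ x : Fin n → ℝ, x ≠ 0 → 0 ≤ x ⬝ᵥ ((1 / 2 : ℝ) • (B + Bᵀ)) *ᵥ x)
    (t : ℝ) (ht : 0 < t) :
    (((1 / 2 : ℝ) • ((B + t • 1) + (B + t • 1)ᵀ)).PosDef) := by
  have key : (1 / 2 : ℝ) • ((B + t • 1) + (B + t • 1)ᵀ)
      = (1 / 2 : ℝ) • (B + Bᵀ) + t • 1 := by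
    rw [transpose_add, transpose_smul, transpose_one]
    module
  rw [key]
  refine Matrix.PosDef.of_dotProduct_mulVec_pos (hherm.add (by simp [Matrix.IsHermitian])) (fun x hx => ?_)
  simp only [star_trivial, add_mulVec, dotProduct_add, smul_mulVec, one_mulVec,
    dotProduct_smul, smul_eq_mul]
  have h2 : (0:ℝ) < t * (x ⬝ᵥ x) := mul_pos ht (dotProduct_self_pos' hx)
  have h1 := hq x hx
  simp only [star_trivial, smul_mulVec, dotProduct_smul, smul_eq_mul, add_mulVec, dotProduct_add] at h1
  linarith

lemma strict_case {n : ℕ} (A : Matrix (Fin n) (Fin n) ℝ)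
    (h : (((1 / 2 : ℝ) • (A + Aᵀ)).PosDef)) : 0 < A.det := by
  set p := (-A).charpoly with hp
  have hev : ∀ t : ℝ, p.eval t = (A + t • 1).det := by
    intro t
    rw [hp, eval_charpoly', sub_neg_eq_add, add_comm]
  have hne : ∀ t : ℝ, 0 ≤ t → p.eval t ≠ 0 := by
    intro t ht
    rcases eq_or_lt_of_le ht with rfl | ht'
    · rw [hev]; simp only [zero_smul, add_zero]; exact det_ne_zero_of_acc _ h
    · rw [hev]
      exact det_ne_zero_of_acc _
        (shift_posdef A h.1 (fun x hx => le_of_lt (h.dotProduct_mulVec_pos hx)) t ht')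
  rcases Nat.eq_zero_or_pos n with hn | hn
  · subst hn
    simp [Matrix.det_fin_zero]
  · have hmonic : p.Monic := (-A).charpoly_monic
    have hdeg : p.natDegree = n := by
      rw [hp, Matrix.charpoly_natDegree_eq_dim]; simp
    have hdeg' : 0 < p.degree := by
      rw [Polynomial.degree_eq_natDegree hmonic.ne_zero, hdeg]; exact_mod_cast hn
    have htop := p.tendsto_atTop_of_leadingCoeff_nonneg hdeg' (by rw [hmonic.leadingCoeff]; norm_num)
    obtain ⟨T, hT⟩ := ((htop.eventually_gt_atTop 0).and (Filter.eventually_ge_atTop (0:ℝ))).exists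
    have hcont : Continuous fun t : ℝ => p.eval t := p.continuous
    have h0 : p.eval 0 ≠ 0 := hne 0 le_rfl
    by_contra hle
    push_neg at hle
    have h0' : p.eval 0 < 0 := by
      rw [hev 0, zero_smul, add_zero] at h0 ⊢
      rcases lt_or_eq_of_le hle with h' | h'
      · exact h'
      · exact absurd h' h0
    obtain ⟨t, ht, hteq⟩ := intermediate_value_Icc hT.2 hcont.continuousOn
      (Set.mem_Icc.2 ⟨le_of_lt h0', le_of_lt hT.1⟩)
    exact hne t ht.1 hteq

theorem stmt_17 (n : ℕ) (A : Matrix (Fin n) (Fin n) ℝ) :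
    (((1 / 2 : ℝ) • (A + Aᵀ)).PosSemidef → 0 ≤ A.det) ∧
      (((1 / 2 : ℝ) • (A + Aᵀ)).PosDef → 0 < A.det) := by
  refine ⟨fun h => ?_, strict_case A⟩
  set p := (-A).charpoly with hp
  have hev : ∀ t : ℝ, p.eval t = (A + t • 1).det := by
    intro t
    rw [hp, eval_charpoly', sub_neg_eq_add, add_comm]
  have hpos : ∀ t : ℝ, 0 < t → 0 < p.eval t := by
    intro t ht
    rw [hev]
    exact strict_case _ (shift_posdef A h.1 (fun x _ => h.dotProduct_mulVec_nonneg x) t ht)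
  have hcont : Filter.Tendsto (fun t : ℝ => p.eval t) (nhdsWithin 0 (Set.Ioi 0))
      (nhds (p.eval 0)) := (p.continuous.tendsto 0).mono_left nhdsWithin_le_nhds
  have h0 : 0 ≤ p.eval 0 :=
    ge_of_tendsto hcont (Filter.eventually_iff_exists_mem.2
      ⟨Set.Ioi 0, self_mem_nhdsWithin, fun t ht => le_of_lt (hpos t ht)⟩)
  rwa [hev 0, zero_smul, add_zero] at h0
end

section
/- If A is an n×n real matrix whose symmetric part (A+Aᵀ)/2 is positive semidefinite, then the adjugate adj(A) also has positive semidefinite symmetric part. -/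
open Matrix

lemma quad_transpose_aux {n : ℕ} (A : Matrix (Fin n) (Fin n) ℝ) (x : Fin n → ℝ) :
    x ⬝ᵥ (Aᵀ *ᵥ x) = x ⬝ᵥ (A *ᵥ x) := by
  rw [dotProduct_mulVec, vecMul_transpose, dotProduct_comm]

lemma quad_sym_aux {n : ℕ} (A : Matrix (Fin n) (Fin n) ℝ) (x : Fin n → ℝ) :
    x ⬝ᵥ (((1 / 2 : ℝ) • (A + Aᵀ)) *ᵥ x) = x ⬝ᵥ (A *ᵥ x) := by
  rw [smul_mulVec, add_mulVec, dotProduct_smul, dotProduct_add, quad_transpose_aux,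
    smul_eq_mul]
  ring

lemma quad_pos_aux {n : ℕ} {A : Matrix (Fin n) (Fin n) ℝ}
    (h : ((1 / 2 : ℝ) • (A + Aᵀ)).PosDef) {x : Fin n → ℝ} (hx : x ≠ 0) :
    0 < x ⬝ᵥ (A *ᵥ x) := by
  have := h.dotProduct_mulVec_pos hx
  rwa [star_trivial, quad_sym_aux] at this

lemma det_pos_aux {n : ℕ} (A : Matrix (Fin n) (Fin n) ℝ)
    (h : ((1 / 2 : ℝ) • (A + Aᵀ)).PosDef) : 0 < A.det := by
  set f : ℝ → Matrix (Fin n) (Fin n) ℝ := fun t => (1 - t) • (1 : Matrix (Fin n) (Fin n) ℝ) + t • A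
    with hf
  have hquad : ∀ t ∈ Set.Icc (0 : ℝ) 1, ∀ x : Fin n → ℝ, x ≠ 0 → 0 < x ⬝ᵥ (f t *ᵥ x) := by
    intro t ht x hx
    have heq : x ⬝ᵥ (f t *ᵥ x) = (1 - t) * (x ⬝ᵥ x) + t * (x ⬝ᵥ (A *ᵥ x)) := by
      simp [hf, add_mulVec, smul_mulVec, dotProduct_add, dotProduct_smul, smul_eq_mul,
        one_mulVec]
    rw [heq]
    have hxx : 0 < x ⬝ᵥ x := by
      have := Matrix.dotProduct_self_star_pos_iff.2 hx
      simpa using this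
    have hAx : 0 < x ⬝ᵥ (A *ᵥ x) := quad_pos_aux h hx
    rcases eq_or_lt_of_le ht.1 with h0 | h0
    · rw [← h0]; simpa using hxx
    · have h1 : 0 ≤ (1 - t) * (x ⬝ᵥ x) := mul_nonneg (by linarith [ht.2]) hxx.le
      have h2 : 0 < t * (x ⬝ᵥ (A *ᵥ x)) := mul_pos h0 hAx
      linarith
  have hdet : ∀ t ∈ Set.Icc (0 : ℝ) 1, (f t).det ≠ 0 := by
    intro t ht hdet0
    obtain ⟨v, hv, hv0⟩ := (Matrix.exists_mulVec_eq_zero_iff).2 hdet0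
    have := hquad t ht v hv
    rw [hv0] at this
    simp at this
  have hcont : Continuous fun t => (f t).det := by
    apply Continuous.matrix_det
    fun_prop
  have hf0 : (f 0).det = 1 := by simp [hf]
  have hf1 : f 1 = A := by simp [hf]
  by_contra hle
  push_neg at hle
  have hne : A.det ≠ 0 := by
    have := hdet 1 (by norm_num)
    rwa [hf1] at this
  have hlt : A.det < 0 := lt_of_le_of_ne hle hne
  have hsub : Set.Icc ((f 1).det) ((f 0).det) ⊆ (fun t => (f t).det) '' Set.Icc 0 1 :=
    intermediate_value_Icc' (by norm_num) hcont.continuousOn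
  have h0mem : (0 : ℝ) ∈ Set.Icc ((f 1).det) ((f 0).det) := by
    rw [hf0, hf1]; exact ⟨hlt.le, by norm_num⟩
  obtain ⟨t, ht, ht0⟩ := hsub h0mem
  exact hdet t ht ht0

lemma adj_quad_nonneg_aux {n : ℕ} (A : Matrix (Fin n) (Fin n) ℝ)
    (h : ((1 / 2 : ℝ) • (A + Aᵀ)).PosDef) (x : Fin n → ℝ) :
    0 ≤ x ⬝ᵥ (A.adjugate *ᵥ x) := by
  have hdet : 0 < A.det := det_pos_aux A h
  have hunit : IsUnit A.det := isUnit_iff_ne_zero.2 hdet.ne'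
  have hadj : A.adjugate = A.det • A⁻¹ := by
    rw [Matrix.inv_def, smul_smul, Ring.mul_inverse_cancel _ hunit, one_smul]
  set y : Fin n → ℝ := A⁻¹ *ᵥ x with hy
  have hAy : A *ᵥ y = x := by
    rw [hy, mulVec_mulVec, Matrix.mul_nonsing_inv A hunit, one_mulVec]
  have key : x ⬝ᵥ (A.adjugate *ᵥ x) = A.det * (y ⬝ᵥ (A *ᵥ y)) := by
    rw [hadj, smul_mulVec, dotProduct_smul, smul_eq_mul]
    congr 1
    rw [← hy]
    conv_lhs => rw [← hAy]
    rw [dotProduct_comm]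
  rw [key]
  rcases eq_or_ne y 0 with hy0 | hy0
  · simp [hy0]
  · exact le_of_lt (mul_pos hdet (quad_pos_aux h hy0))

theorem stmt_18 (n : ℕ) (A : Matrix (Fin n) (Fin n) ℝ)
    (hA : ((1 / 2 : ℝ) • (A + Aᵀ)).PosSemidef) :
    ((1 / 2 : ℝ) • (A.adjugate + A.adjugateᵀ)).PosSemidef := by
  refine posSemidef_iff_dotProduct_mulVec.2 ⟨?_, ?_⟩
  · show _ᴴ = _
    ext i j
    simp [Matrix.conjTranspose_apply, Matrix.transpose_apply, Matrix.add_apply,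
      Matrix.smul_apply]
    ring
  · intro x
    rw [star_trivial, quad_sym_aux]
    set q : ℝ → ℝ := fun ε => x ⬝ᵥ ((A + ε • 1).adjugate *ᵥ x) with hq
    have hcont : Continuous q := by
      apply Continuous.dotProduct continuous_const
      apply Continuous.matrix_mulVec _ continuous_const
      apply Continuous.matrix_adjugate
      fun_prop
    have hpos : ∀ ε : ℝ, 0 < ε → 0 ≤ q ε := by
      intro ε hε
      have hsym : ((1 / 2 : ℝ) • ((A + ε • 1) + (A + ε • 1)ᵀ))
          = ((1 / 2 : ℝ) • (A + Aᵀ)) + ε • 1 := by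
        rw [transpose_add, transpose_smul, transpose_one]
        rw [smul_add]
        module
      have hεI : ((ε : ℝ) • (1 : Matrix (Fin n) (Fin n) ℝ)).PosDef := by
        rw [Matrix.smul_one_eq_diagonal]
        exact Matrix.posDef_diagonal_iff.2 fun _ => hε
      have hpd : ((1 / 2 : ℝ) • ((A + ε • 1) + (A + ε • 1)ᵀ)).PosDef := by
        rw [hsym]
        exact Matrix.PosDef.posSemidef_add hA hεI
      exact adj_quad_nonneg_aux _ hpd x
    have hle : 0 ≤ q 0 := by
      have htend : Filter.Tendsto q (nhdsWithin 0 (Set.Ioi 0)) (nhds (q 0)) :=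
        (hcont.tendsto 0).mono_left nhdsWithin_le_nhds
      refine ge_of_tendsto htend ?_
      filter_upwards [self_mem_nhdsWithin] with ε hε using hpos ε hε
    have hq0 : q 0 = x ⬝ᵥ (A.adjugate *ᵥ x) := by simp [hq]
    linarith
end

section
/- Let A be an n×n real matrix with (A+Aᵀ)/2 positive semidefinite. Then det A_{n-1}(1,1)·det A_{n-1}(2,2) ≥ ((det A_{n-1}(1,2) + det A_{n-1}(2,1))/2)², and hence √(det A_{n-1}(1,1)·det A_{n-1}(2,2)) ≥ |(det A_{n-1}(1,2)+det A_{n-1}(2,1))/2|. -/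
open Matrix

private theorem aux_det_pos {N : ℕ} (A : Matrix (Fin N) (Fin N) ℝ)
    (hq : ∀ x, 0 ≤ x ⬝ᵥ A.mulVec x) : 0 < (A + 1).det := by
  set g : ℝ → ℝ := fun s => (s • A + 1).det with hg
  have hcont : Continuous g :=
    ((continuous_id.smul continuous_const).add continuous_const).matrix_det
  have hne : ∀ s : ℝ, 0 ≤ s → g s ≠ 0 := by
    intro s hs h0
    obtain ⟨v, hv, hv0⟩ := (Matrix.exists_mulVec_eq_zero_iff.mpr h0)
    have h1 : v ⬝ᵥ (s • A + 1).mulVec v = 0 := by rw [hv0, dotProduct_zero]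
    rw [Matrix.add_mulVec, dotProduct_add, Matrix.smul_mulVec, dotProduct_smul,
      Matrix.one_mulVec] at h1
    have h2 : 0 < v ⬝ᵥ v := by
      have hnn : 0 ≤ v ⬝ᵥ v := Finset.sum_nonneg fun i _ => mul_self_nonneg (v i)
      rcases hnn.lt_or_eq with h | h
      · exact h
      · exact absurd ((dotProduct_self_eq_zero).mp h.symm) hv
    have := smul_nonneg hs (hq v)
    nlinarith [this, h2]
  have hg0 : g 0 = 1 := by simp [hg]
  by_contra hle
  push_neg at hle
  have h1ne : g 1 ≠ 0 := hne 1 zero_le_one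
  have hg1 : g 1 < 0 := by
    have : g 1 = (A + 1).det := by simp [hg]
    rcases lt_or_eq_of_le (by rwa [← this] at hle) with h | h
    · exact h
    · exact absurd h h1ne
  obtain ⟨s, hs, hgs⟩ := intermediate_value_Icc' (zero_le_one) hcont.continuousOn
    (by rw [hg0]; exact Set.mem_Icc.mpr ⟨hg1.le, zero_le_one⟩)
  exact hne s hs.1 hgs

private theorem aux_det_eps_pos {N : ℕ} (A : Matrix (Fin N) (Fin N) ℝ)
    (hq : ∀ x, 0 ≤ x ⬝ᵥ A.mulVec x) {ε : ℝ} (hε : 0 < ε) :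
    0 < (A + ε • (1 : Matrix (Fin N) (Fin N) ℝ)).det := by
  have h1 : A + ε • (1 : Matrix (Fin N) (Fin N) ℝ) = ε • (ε⁻¹ • A + 1) := by
    rw [smul_add, smul_smul, mul_inv_cancel₀ hε.ne', one_smul]
  have h2 : ∀ x, 0 ≤ x ⬝ᵥ (ε⁻¹ • A).mulVec x := by
    intro x
    rw [Matrix.smul_mulVec, dotProduct_smul]
    exact smul_nonneg (inv_nonneg.mpr hε.le) (hq x)
  rw [h1, det_smul]
  exact mul_pos (pow_pos hε _) (aux_det_pos _ h2)

private theorem aux_adj_psd {N : ℕ} (A : Matrix (Fin N) (Fin N) ℝ)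
    (hq : ∀ x, 0 ≤ x ⬝ᵥ A.mulVec x) (y : Fin N → ℝ) :
    0 ≤ y ⬝ᵥ (adjugate A).mulVec y := by
  set f : ℝ → ℝ := fun ε => y ⬝ᵥ (adjugate (A + ε • 1)).mulVec y with hf
  have hcont : Continuous f :=
    (continuous_const.dotProduct
      (((continuous_const.add (continuous_id.smul continuous_const)).matrix_adjugate).matrix_mulVec
        continuous_const))
  have hpos : ∀ ε : ℝ, 0 < ε → 0 ≤ f ε := by
    intro ε hε
    set M := A + ε • (1 : Matrix (Fin N) (Fin N) ℝ) with hM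
    have hdet : 0 < M.det := aux_det_eps_pos A hq hε
    have hunit : IsUnit M.det := isUnit_iff_ne_zero.mpr hdet.ne'
    set z := M⁻¹.mulVec y with hz
    have hMz : M.mulVec z = y := by
      rw [hz, Matrix.mulVec_mulVec, Matrix.mul_nonsing_inv _ hunit, Matrix.one_mulVec]
    have hqM : 0 ≤ z ⬝ᵥ M.mulVec z := by
      rw [hM, Matrix.add_mulVec, dotProduct_add, Matrix.smul_mulVec, dotProduct_smul,
        Matrix.one_mulVec]
      have : 0 ≤ z ⬝ᵥ z := Finset.sum_nonneg fun i _ => mul_self_nonneg (z i)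
      have := hq z
      positivity
    have h1 : (adjugate M).mulVec y = M.det • z := by
      conv_lhs => rw [← hMz]
      rw [Matrix.mulVec_mulVec, Matrix.adjugate_mul, Matrix.smul_mulVec,
        Matrix.one_mulVec]
    have h2 : y ⬝ᵥ z = z ⬝ᵥ M.mulVec z := by
      conv_lhs => rw [← hMz]
      rw [dotProduct_comm]
    have hcalc : f ε = M.det * (z ⬝ᵥ M.mulVec z) := by
      show y ⬝ᵥ (adjugate M).mulVec y = _
      rw [h1, dotProduct_smul, smul_eq_mul, h2]
    rw [hcalc]
    exact mul_nonneg hdet.le hqM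
  have h0 : f 0 = y ⬝ᵥ (adjugate A).mulVec y := by simp [hf]
  rw [← h0]
  have htend : Filter.Tendsto f (nhdsWithin 0 (Set.Ioi 0)) (nhds (f 0)) :=
    (hcont.continuousAt).continuousWithinAt
  refine ge_of_tendsto htend ?_
  filter_upwards [self_mem_nhdsWithin] with ε hε
  exact hpos ε hε

private theorem aux_two {N : ℕ} (M : Matrix (Fin N) (Fin N) ℝ)
    (h : ∀ y, 0 ≤ y ⬝ᵥ M.mulVec y) (i j : Fin N) :
    (M i j + M j i) ^ 2 ≤ 4 * (M i i * M j j) := by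
  have key : ∀ t : ℝ, 0 ≤ M i i * (t * t) + (M i j + M j i) * t + M j j := by
    intro t
    have hy := h (t • (Pi.single i 1 : Fin N → ℝ) + (Pi.single j 1 : Fin N → ℝ))
    have e : (t • (Pi.single i 1 : Fin N → ℝ) + (Pi.single j 1 : Fin N → ℝ)) ⬝ᵥ
        M.mulVec (t • (Pi.single i 1 : Fin N → ℝ) + (Pi.single j 1 : Fin N → ℝ))
        = M i i * (t * t) + (M i j + M j i) * t + M j j := by
      simp [Matrix.mulVec_add, Matrix.mulVec_smul, Matrix.mulVec_single, add_dotProduct,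
        smul_dotProduct, dotProduct_add, dotProduct_smul, single_dotProduct,
        smul_eq_mul]
      ring
    rwa [e] at hy
  have hd := discrim_le_zero key
  rw [discrim] at hd
  nlinarith [hd]

theorem stmt_19 (n : ℕ) (A : Matrix (Fin (n + 1)) (Fin (n + 1)) ℝ)
    (hA : ((1 / 2 : ℝ) • (A + Aᵀ)).PosSemidef) :
    (A.submatrix Fin.castSucc Fin.castSucc).det * (A.submatrix Fin.succ Fin.succ).det ≥
        (((A.submatrix Fin.castSucc Fin.succ).det +
            (A.submatrix Fin.succ Fin.castSucc).det) / 2) ^ 2 ∧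
      Real.sqrt ((A.submatrix Fin.castSucc Fin.castSucc).det *
          (A.submatrix Fin.succ Fin.succ).det) ≥
        |((A.submatrix Fin.castSucc Fin.succ).det +
            (A.submatrix Fin.succ Fin.castSucc).det) / 2| := by
  have hq : ∀ x, 0 ≤ x ⬝ᵥ A.mulVec x := by
    intro x
    have hsym : x ⬝ᵥ Aᵀ.mulVec x = x ⬝ᵥ A.mulVec x := by
      rw [Matrix.dotProduct_mulVec, Matrix.vecMul_transpose, dotProduct_comm]
    have h2 := hA.dotProduct_mulVec_nonneg x
    rw [star_trivial, Matrix.smul_mulVec, dotProduct_smul, Matrix.add_mulVec,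
      dotProduct_add, hsym, smul_eq_mul] at h2
    linarith
  set B := (A.submatrix Fin.castSucc Fin.castSucc).det with hB
  set C := (A.submatrix Fin.succ Fin.succ).det with hC
  set P := (A.submatrix Fin.castSucc Fin.succ).det with hP
  set Q := (A.submatrix Fin.succ Fin.castSucc).det with hQ
  have hmain : ((P + Q) / 2) ^ 2 ≤ B * C := by
    match n, A, hq, hB, hC, hP, hQ with
    | 0, A, hq, hB, hC, hP, hQ =>
      rw [hB, hC, hP, hQ]
      simp [Matrix.det_fin_zero]
    | (m + 1), A, hq, hB, hC, hP, hQ =>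
      have key := aux_two (adjugate A) (aux_adj_psd A hq) 0 (Fin.last (m + 1))
      have e00 : adjugate A 0 0 = C := by
        rw [hC, adjugate_fin_succ_eq_det_submatrix, Fin.succAbove_zero]
        simp
      have ell : adjugate A (Fin.last (m + 1)) (Fin.last (m + 1)) = B := by
        rw [hB, adjugate_fin_succ_eq_det_submatrix, Fin.succAbove_last]
        rw [Fin.val_last, Even.neg_one_pow ⟨m + 1, rfl⟩, one_mul]
      have e0l : adjugate A 0 (Fin.last (m + 1)) = (-1 : ℝ) ^ (m + 1) * P := by
        rw [hP, adjugate_fin_succ_eq_det_submatrix, Fin.succAbove_last, Fin.succAbove_zero]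
        simp
      have el0 : adjugate A (Fin.last (m + 1)) 0 = (-1 : ℝ) ^ (m + 1) * Q := by
        rw [hQ, adjugate_fin_succ_eq_det_submatrix, Fin.succAbove_last, Fin.succAbove_zero]
        simp
      rw [e00, ell, e0l, el0] at key
      have hsq : ((-1 : ℝ) ^ (m + 1)) ^ 2 = 1 := by
        rw [← pow_mul, mul_comm, pow_mul]
        norm_num
      nlinarith [key, hsq]
  constructor
  · nlinarith [hmain]
  · calc |(P + Q) / 2| = Real.sqrt (((P + Q) / 2) ^ 2) := (Real.sqrt_sq_eq_abs _).symm
      _ ≤ Real.sqrt (B * C) := Real.sqrt_le_sqrt hmain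
end
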